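/- arXiv:2309.03974 — 8 statements merged into one kernel-verified Lean document; each statement's English description precedes it below -/
import Mathlib

section
/- The LOORF estimator can be decomposed as Reinforce plus a discrepancy correction: (1/n)·Σ_{i=1}^n (f(x_i) - (1/(n-1))·Σ_{j≠i} f(x_j))·(x_i - p) = (1/(n-1))·Σ_{i=1}^n f(x_i)·(x_i - p) - (p̂ - p)·(1/(n-1))·Σ_{i=1}^n f(x_i), where p̂ = (1/n)·Σ_{i=1}^n x_i. -/
open Finset

/-- LOORF = Reinforce + discrepancy correction (algebraic identity in ℝ^d). -/
theorem loorf_eq_reinforce_sub_discrepancy (n d : ℕ) (hn : 2 ≤ n)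
    (x : Fin n → Fin d → ℝ) (p : Fin d → ℝ) (f : (Fin d → ℝ) → ℝ) :
    ((n : ℝ)⁻¹) • ∑ i, (f (x i) - ((n : ℝ) - 1)⁻¹ * ∑ j ∈ Finset.univ.erase i, f (x j)) • (x i - p)
      = ((n : ℝ) - 1)⁻¹ • (∑ i, f (x i) • (x i - p))
        - (((n : ℝ) - 1)⁻¹ * ∑ i, f (x i)) • ((((n : ℝ)⁻¹) • ∑ i, x i) - p) := by
  have h2 : (2:ℝ) ≤ (n:ℝ) := by exact_mod_cast hn
  have hn1 : (n:ℝ) - 1 ≠ 0 := by linarith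
  have hn0 : (n:ℝ) ≠ 0 := by linarith
  funext k
  simp only [Finset.sum_apply, Pi.smul_apply, Pi.sub_apply, smul_eq_mul]
  have herase : ∀ i : Fin n, ∑ j ∈ Finset.univ.erase i, f (x j)
      = (∑ j, f (x j)) - f (x i) := fun i => by
    rw [Finset.sum_erase_eq_sub (Finset.mem_univ i)]
  simp only [herase]
  set S := ∑ j, f (x j) with hS
  have key : ∀ i ∈ Finset.univ, (f (x i) - ((n:ℝ)-1)⁻¹ * (S - f (x i))) * (x i k - p k)
      = ((n:ℝ)/((n:ℝ)-1)) * (f (x i) * (x i k - p k)) - (S/((n:ℝ)-1)) * (x i k - p k) :=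
    fun i _ => by field_simp; ring
  rw [Finset.sum_congr rfl key, Finset.sum_sub_distrib, ← Finset.mul_sum, ← Finset.mul_sum]
  have hsub : ∑ i : Fin n, (x i k - p k) = (∑ i : Fin n, x i k) - n * p k := by
    rw [Finset.sum_sub_distrib, Finset.sum_const, Finset.card_univ, Fintype.card_fin,
      nsmul_eq_mul]
  rw [hsub]
  field_simp
end

section
/- The LOORF estimator is unbiased for independent samples with common mean distribution: if x_1, ..., x_n are i.i.d. Bernoulli(p) with n ≥ 2 and f : {0,1} → ℝ, then E[(1/n)·Σ_{i=1}^n (f(x_i) - (1/(n-1))·Σ_{j≠i} f(x_j))·(x_i - p)] = (f(1) - f(0))·p·(1-p). -/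
open Finset

/-- Value in ℝ of a Bernoulli outcome. -/
noncomputable def b2r (b : Bool) : ℝ := if b then 1 else 0

/-- Weight of a Bernoulli outcome. -/
noncomputable def bw (p : ℝ) (b : Bool) : ℝ := if b then p else 1 - p

lemma bw_sum (p : ℝ) : ∑ b : Bool, bw p b = 1 := by simp [bw]

/-- Marginalization: expectation of a single-site function. -/
lemma single_site (n : ℕ) (p : ℝ) (i : Fin n) (h : Bool → ℝ) :
    ∑ x : Fin n → Bool, (∏ k, bw p (x k)) * h (x i)
      = ∑ b : Bool, bw p b * h b := by
  set g : Fin n → Bool → ℝ := fun k b => if k = i then bw p b * h b else bw p b with hg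
  have key : ∀ x : Fin n → Bool,
      (∏ k, bw p (x k)) * h (x i) = ∏ k, g k (x k) := by
    intro x
    rw [← Finset.mul_prod_erase Finset.univ _ (Finset.mem_univ i),
        ← Finset.mul_prod_erase Finset.univ (fun k => g k (x k)) (Finset.mem_univ i)]
    have h1 : g i (x i) = bw p (x i) * h (x i) := by simp [hg]
    have h2 : ∏ k ∈ Finset.univ.erase i, g k (x k)
        = ∏ k ∈ Finset.univ.erase i, bw p (x k) :=
      Finset.prod_congr rfl fun k hk => by
        simp [hg, if_neg (Finset.ne_of_mem_erase hk)]
    rw [h1, h2]; ring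
  simp only [key]
  rw [← Fintype.prod_sum g,
      ← Finset.mul_prod_erase Finset.univ (fun k => ∑ b, g k b) (Finset.mem_univ i)]
  have h1 : ∑ b, g i b = ∑ b : Bool, bw p b * h b := by simp [hg]
  have h2 : ∏ k ∈ Finset.univ.erase i, ∑ b, g k b = 1 := by
    apply Finset.prod_eq_one
    intro k hk
    simp only [hg, if_neg (Finset.ne_of_mem_erase hk)]
    exact bw_sum p
  rw [h1, h2, mul_one]

/-- Two-site: the (x_i - p) factor integrates to 0. -/
lemma two_site (n : ℕ) (p : ℝ) (i j : Fin n) (hij : j ≠ i) (h : Bool → ℝ) :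
    ∑ x : Fin n → Bool, (∏ k, bw p (x k)) * (h (x j) * (b2r (x i) - p)) = 0 := by
  have hji : i ≠ j := fun e => hij e.symm
  set g : Fin n → Bool → ℝ := fun k b =>
    if k = i then bw p b * (b2r b - p)
    else if k = j then bw p b * h b else bw p b with hg
  have key : ∀ x : Fin n → Bool,
      (∏ k, bw p (x k)) * (h (x j) * (b2r (x i) - p)) = ∏ k, g k (x k) := by
    intro x
    have hjmem : j ∈ Finset.univ.erase i := Finset.mem_erase.2 ⟨hij, Finset.mem_univ j⟩
    rw [← Finset.mul_prod_erase Finset.univ _ (Finset.mem_univ i),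
        ← Finset.mul_prod_erase _ _ hjmem,
        ← Finset.mul_prod_erase Finset.univ (fun k => g k (x k)) (Finset.mem_univ i),
        ← Finset.mul_prod_erase _ (fun k => g k (x k)) hjmem]
    have h1 : g i (x i) = bw p (x i) * (b2r (x i) - p) := by simp [hg]
    have h2 : g j (x j) = bw p (x j) * h (x j) := by simp [hg, if_neg hij]
    have h3 : ∏ k ∈ (Finset.univ.erase i).erase j, g k (x k)
        = ∏ k ∈ (Finset.univ.erase i).erase j, bw p (x k) :=
      Finset.prod_congr rfl fun k hk => by
        have hki : k ≠ i := Finset.ne_of_mem_erase (Finset.mem_of_mem_erase hk)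
        have hkj : k ≠ j := Finset.ne_of_mem_erase hk
        simp [hg, if_neg hki, if_neg hkj]
    rw [h1, h2, h3]; ring
  simp only [key]
  rw [← Fintype.prod_sum g]
  apply Finset.prod_eq_zero (Finset.mem_univ i)
  simp only [hg, if_pos rfl]
  simp [b2r, bw]
  ring

/-- the LOORF estimator is unbiased for i.i.d. Bernoulli(p) samples:
its expectation (under the i.i.d. product distribution) equals (f(1)-f(0))·p·(1-p). -/
theorem loorf_unbiased (n : ℕ) (hn : 2 ≤ n) (p : ℝ) (hp0 : 0 < p) (hp1 : p < 1)
    (f : ℝ → ℝ) :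
    ∑ x : Fin n → Bool,
        (∏ i, (if x i then p else 1 - p)) *
          ((n : ℝ)⁻¹ * ∑ i,
            (f (b2r (x i)) - ((n : ℝ) - 1)⁻¹ * ∑ j ∈ Finset.univ.erase i, f (b2r (x j))) *
              (b2r (x i) - p))
      = (f 1 - f 0) * p * (1 - p) := by
  have hC : ∑ b : Bool, bw p b * (f (b2r b) * (b2r b - p))
      = (f 1 - f 0) * p * (1 - p) := by
    simp [bw, b2r]; ring
  have step : ∀ x : Fin n → Bool,
      (∏ i, (if x i then p else 1 - p)) *
          ((n : ℝ)⁻¹ * ∑ i,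
            (f (b2r (x i)) - ((n : ℝ) - 1)⁻¹ * ∑ j ∈ Finset.univ.erase i, f (b2r (x j))) *
              (b2r (x i) - p))
        = (n : ℝ)⁻¹ * ∑ i,
            ((∏ k, bw p (x k)) * (f (b2r (x i)) * (b2r (x i) - p))
              - ((n : ℝ) - 1)⁻¹ * ∑ j ∈ Finset.univ.erase i,
                  (∏ k, bw p (x k)) * (f (b2r (x j)) * (b2r (x i) - p))) := by
    intro x
    have hw : (∏ i, (if x i then p else 1 - p)) = ∏ k, bw p (x k) := rfl
    rw [hw, mul_left_comm]
    congr 1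
    rw [Finset.mul_sum]
    refine Finset.sum_congr rfl fun i _ => ?_
    have hE : ∑ j ∈ Finset.univ.erase i,
          (∏ k, bw p (x k)) * (f (b2r (x j)) * (b2r (x i) - p))
        = ((∏ k, bw p (x k)) * (b2r (x i) - p)) * ∑ j ∈ Finset.univ.erase i, f (b2r (x j)) := by
      rw [Finset.mul_sum]
      exact Finset.sum_congr rfl fun j _ => by ring
    rw [hE]; ring
  simp only [step]
  rw [← Finset.mul_sum, Finset.sum_comm]
  have inner : ∀ i : Fin n,
      ∑ x : Fin n → Bool,
          ((∏ k, bw p (x k)) * (f (b2r (x i)) * (b2r (x i) - p))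
            - ((n : ℝ) - 1)⁻¹ * ∑ j ∈ Finset.univ.erase i,
                (∏ k, bw p (x k)) * (f (b2r (x j)) * (b2r (x i) - p)))
        = (f 1 - f 0) * p * (1 - p) := by
    intro i
    rw [Finset.sum_sub_distrib]
    have hA : ∑ x : Fin n → Bool, (∏ k, bw p (x k)) * (f (b2r (x i)) * (b2r (x i) - p))
        = (f 1 - f 0) * p * (1 - p) := by
      rw [single_site n p i (fun b => f (b2r b) * (b2r b - p))]; exact hC
    have hB : ∑ x : Fin n → Bool,
        ((n : ℝ) - 1)⁻¹ * ∑ j ∈ Finset.univ.erase i,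
          (∏ k, bw p (x k)) * (f (b2r (x j)) * (b2r (x i) - p)) = 0 := by
      rw [← Finset.mul_sum, Finset.sum_comm]
      have : ∀ j ∈ Finset.univ.erase i,
          ∑ x : Fin n → Bool, (∏ k, bw p (x k)) * (f (b2r (x j)) * (b2r (x i) - p)) = 0 :=
        fun j hj => two_site n p i j (Finset.ne_of_mem_erase hj) (fun b => f (b2r b))
      rw [Finset.sum_congr rfl this]
      simp
    rw [hA, hB, sub_zero]
  rw [Finset.sum_congr rfl fun i _ => inner i, Finset.sum_const, Finset.card_univ,
      Fintype.card_fin, nsmul_eq_mul, ← mul_assoc]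
  have hn0 : (n : ℝ) ≠ 0 := by positivity
  rw [inv_mul_cancel₀ hn0, one_mul]
end

section
/- Distribution preservation of DBsample (general n, 1-dimensional case): let p ∈ (0,1), n ∈ ℕ, and 0 ≤ α ≤ min((1-p)/p, p/(1-p)). Define the sampling process: q_1 = p, x_k ~ Bernoulli(q_k) conditionally on the past, p̂_k = (1/k)·Σ_{j≤k} x_j, and q_{k+1} = clip(p(1+α) - α·p̂_k, 0, 1). Then for all k ∈ {1,...,n}: (i) q_k = p(1+α) - α·p̂_{k-1} (no clipping occurs), and (ii) E[x_k] = p. -/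
open Finset

/-- Empirical mean p̂ₖ of the first k samples (0-based: samples x₀, …, x_{k-1}). -/
noncomputable def phat {n : ℕ} (x : Fin n → Bool) (k : ℕ) : ℝ :=
  (k : ℝ)⁻¹ * ∑ j : Fin n, if (j : ℕ) < k ∧ x j = true then (1 : ℝ) else 0

/-- Parameter used by DBsample at (0-based) step k:
q₀ = p and q_k = clip(p(1+α) - α·p̂ₖ, 0, 1) for k ≥ 1. -/
noncomputable def dbq {n : ℕ} (p α : ℝ) (x : Fin n → Bool) (k : ℕ) : ℝ :=
  if k = 0 then p else min 1 (max 0 (p * (1 + α) - α * phat x k))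

/-- Joint density of the n DBsample draws. -/
noncomputable def dbDens {n : ℕ} (p α : ℝ) (x : Fin n → Bool) : ℝ :=
  ∏ k : Fin n, (if x k then dbq p α x (k : ℕ) else 1 - dbq p α x (k : ℕ))

/- ---------- auxiliary development ---------- -/

noncomputable def dbf {n : ℕ} (p α : ℝ) (k : Fin n) (x : Fin n → Bool) : ℝ :=
  if x k then dbq p α x (k : ℕ) else 1 - dbq p α x (k : ℕ)

noncomputable def dbP {n : ℕ} (p α : ℝ) (m : ℕ) (x : Fin n → Bool) : ℝ :=
  ∏ k : Fin n, if (k : ℕ) < m then dbf p α k x else 1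

lemma phat_update {n : ℕ} (x : Fin n → Bool) (i : Fin n) (b : Bool) {k : ℕ}
    (hk : k ≤ (i : ℕ)) : phat (Function.update x i b) k = phat x k := by
  unfold phat
  congr 1
  refine Finset.sum_congr rfl fun j _ => ?_
  by_cases hj : j = i
  · subst hj
    have : ¬ ((j : ℕ) < k) := by omega
    simp [this]
  · rw [Function.update_of_ne hj]

lemma dbq_update {n : ℕ} (p α : ℝ) (x : Fin n → Bool) (i : Fin n) (b : Bool) {k : ℕ}
    (hk : k ≤ (i : ℕ)) : dbq p α (Function.update x i b) k = dbq p α x k := by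
  unfold dbq
  rw [phat_update x i b hk]

lemma dbf_update {n : ℕ} (p α : ℝ) (k i : Fin n) (x : Fin n → Bool) (b : Bool)
    (hk : (k : ℕ) < (i : ℕ)) : dbf p α k (Function.update x i b) = dbf p α k x := by
  unfold dbf
  have hne : k ≠ i := by intro h; subst h; omega
  rw [Function.update_of_ne hne, dbq_update p α x i b (le_of_lt hk)]

lemma dbP_update {n : ℕ} (p α : ℝ) {m : ℕ} (i : Fin n) (hm : m ≤ (i : ℕ))
    (x : Fin n → Bool) (b : Bool) :
    dbP p α m (Function.update x i b) = dbP p α m x := by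
  unfold dbP
  refine Finset.prod_congr rfl fun k _ => ?_
  by_cases hk : (k : ℕ) < m
  · rw [if_pos hk, if_pos hk, dbf_update p α k i x b (by omega)]
  · rw [if_neg hk, if_neg hk]

lemma half_sum {n : ℕ} (i : Fin n) (h g : (Fin n → Bool) → ℝ)
    (hinv : ∀ x b, h (Function.update x i b) = h x)
    (hg : ∀ x, g x + g (Function.update x i (!x i)) = 1) :
    ∑ x : Fin n → Bool, h x * g x = (1/2) * ∑ x : Fin n → Bool, h x := by
  have hinvol : Function.Involutive
      (fun x : Fin n → Bool => Function.update x i (!x i)) := by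
    intro x
    funext j
    by_cases hj : j = i
    · subst hj; simp
    · simp [Function.update_of_ne hj]
  have key : ∑ x : Fin n → Bool, h x * g x
      = ∑ x : Fin n → Bool, h x * g (Function.update x i (!x i)) := by
    calc ∑ x : Fin n → Bool, h x * g x
        = ∑ x : Fin n → Bool,
            h (Function.update x i (!x i)) * g (Function.update x i (!x i)) :=
          (Equiv.sum_comp (Function.Involutive.toPerm _ hinvol)
            (fun x => h x * g x)).symm
      _ = _ := by
          refine Finset.sum_congr rfl fun x _ => ?_
          rw [hinv]
  have h2 : 2 * (∑ x : Fin n → Bool, h x * g x) = ∑ x : Fin n → Bool, h x := by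
    rw [two_mul]
    nth_rewrite 2 [key]
    rw [← Finset.sum_add_distrib]
    refine Finset.sum_congr rfl fun x _ => ?_
    rw [← mul_add, hg x, mul_one]
  linarith

lemma dbf_pair {n : ℕ} (p α : ℝ) (i : Fin n) (x : Fin n → Bool) :
    dbf p α i x + dbf p α i (Function.update x i (!x i)) = 1 := by
  unfold dbf
  rw [dbq_update p α x i (!x i) (le_refl _), Function.update_self]
  cases hx : x i <;> simp [hx]

lemma b2r_pair {n : ℕ} (i : Fin n) (x : Fin n → Bool) :
    b2r (x i) + b2r (Function.update x i (!x i) i) = 1 := by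
  rw [Function.update_self]
  cases hx : x i <;> simp [b2r]

lemma dbf_mul_b2r {n : ℕ} (p α : ℝ) (i : Fin n) (x : Fin n → Bool) :
    dbf p α i x * b2r (x i) = dbq p α x (i : ℕ) * b2r (x i) := by
  unfold dbf b2r
  cases hx : x i <;> simp [hx]

lemma dbP_succ {n : ℕ} (p α : ℝ) {m : ℕ} (hm : m < n) (x : Fin n → Bool) :
    dbP p α (m+1) x = dbP p α m x * dbf p α ⟨m, hm⟩ x := by
  unfold dbP
  have hpt : ∀ k : Fin n, (if (k : ℕ) < m + 1 then dbf p α k x else 1)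
      = (if (k : ℕ) < m then dbf p α k x else 1) *
        (if k = ⟨m, hm⟩ then dbf p α k x else 1) := by
    intro k
    rcases lt_trichotomy (k : ℕ) m with h | h | h
    · rw [if_pos (by omega), if_pos h,
        if_neg (by intro hk; subst hk; simp at h), mul_one]
    · have hk : k = ⟨m, hm⟩ := Fin.ext h
      subst hk
      rw [if_pos (by simp), if_neg (by simp), if_pos rfl, one_mul]
    · rw [if_neg (by omega), if_neg (by omega),
        if_neg (by intro hk; subst hk; simp at h), mul_one]
  rw [Finset.prod_congr rfl (fun k _ => hpt k), Finset.prod_mul_distrib]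
  congr 1
  simp

lemma mul_phat {n : ℕ} (x : Fin n → Bool) (k : ℕ) :
    (k : ℝ) * phat x k
      = ∑ j : Fin n, if (j : ℕ) < k ∧ x j = true then (1 : ℝ) else 0 := by
  unfold phat
  rcases Nat.eq_zero_or_pos k with hk | hk
  · subst hk; simp
  · rw [← mul_assoc, mul_inv_cancel₀ (Nat.cast_ne_zero.mpr (by omega)), one_mul]

lemma phat_succ {n : ℕ} (x : Fin n → Bool) {m : ℕ} (hm : m < n) :
    ((m : ℝ) + 1) * phat x (m+1) = (m : ℝ) * phat x m + b2r (x ⟨m, hm⟩) := by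
  have h1 := mul_phat x (m+1)
  have h2 := mul_phat x m
  rw [Nat.cast_add, Nat.cast_one] at h1
  rw [h1, h2]
  have hpt : ∀ j : Fin n, (if (j : ℕ) < m + 1 ∧ x j = true then (1:ℝ) else 0)
      = (if (j : ℕ) < m ∧ x j = true then (1:ℝ) else 0)
        + (if j = ⟨m, hm⟩ then b2r (x j) else 0) := by
    intro j
    by_cases hj : j = ⟨m, hm⟩
    · subst hj
      simp [b2r]
    · have hjm : (j : ℕ) ≠ m := fun h => hj (Fin.ext h)
      have hiff : ((j : ℕ) < m + 1) ↔ ((j : ℕ) < m) := by omega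
      rw [if_neg hj, add_zero]
      by_cases hx : x j = true <;> simp [hx, hiff]
  rw [Finset.sum_congr rfl (fun j _ => hpt j), Finset.sum_add_distrib]
  congr 1
  rw [Finset.sum_ite_eq' Finset.univ (⟨m, hm⟩ : Fin n) (fun j => b2r (x j))]
  simp

lemma phat_nonneg {n : ℕ} (x : Fin n → Bool) (k : ℕ) : 0 ≤ phat x k := by
  unfold phat
  apply mul_nonneg (by positivity)
  apply Finset.sum_nonneg
  intro j _
  positivity

lemma phat_le_one {n : ℕ} (x : Fin n → Bool) {k : ℕ} (hk : 1 ≤ k) :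
    phat x k ≤ 1 := by
  unfold phat
  have hsum : (∑ j : Fin n, if (j : ℕ) < k ∧ x j = true then (1:ℝ) else 0)
      ≤ (k : ℝ) := by
    calc (∑ j : Fin n, if (j : ℕ) < k ∧ x j = true then (1:ℝ) else 0)
        ≤ ∑ j : Fin n, (if (j : ℕ) < k then (1:ℝ) else 0) := by
          apply Finset.sum_le_sum
          intro j _
          by_cases h1 : (j : ℕ) < k
          · by_cases h2 : x j = true <;> simp [h1, h2]
          · simp [h1]
      _ = ((Finset.univ.filter (fun j : Fin n => (j : ℕ) < k)).card : ℝ) := by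
          rw [Finset.sum_ite, Finset.sum_const, Finset.sum_const]
          simp
      _ ≤ (k : ℝ) := by
          have hcard : (Finset.univ.filter (fun j : Fin n => (j : ℕ) < k)).card
              ≤ (Finset.range k).card := by
            apply Finset.card_le_card_of_injOn (fun j : Fin n => (j : ℕ))
            · intro j hj
              simp only [Finset.mem_coe, Finset.mem_filter] at hj
              simpa using hj.2
            · intro a _ b _ hab
              exact Fin.ext hab
          rw [Finset.card_range] at hcard
          exact_mod_cast hcard
  have hkpos : (0:ℝ) < (k : ℝ) := by exact_mod_cast hk
  have := mul_le_mul_of_nonneg_left hsum (le_of_lt (inv_pos.mpr hkpos))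
  rwa [inv_mul_cancel₀ (ne_of_gt hkpos)] at this

lemma dbq_eq {n : ℕ} {p α : ℝ} (hp0 : 0 < p) (hp1 : p < 1) (hα0 : 0 ≤ α)
    (hα : α ≤ min ((1 - p) / p) (p / (1 - p))) (x : Fin n → Bool) {k : ℕ}
    (hk : 1 ≤ k) : dbq p α x k = p * (1 + α) - α * phat x k := by
  have h0 := phat_nonneg x k
  have h1 := phat_le_one x hk
  have hα1 : α * p ≤ 1 - p := by
    have := le_trans hα (min_le_left _ _)
    rwa [le_div_iff₀ hp0] at this
  have hα2 : α * (1 - p) ≤ p := by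
    have := le_trans hα (min_le_right _ _)
    rwa [le_div_iff₀ (by linarith)] at this
  have hub : p * (1 + α) - α * phat x k ≤ 1 := by nlinarith [mul_nonneg hα0 h0]
  have hlb : 0 ≤ p * (1 + α) - α * phat x k := by
    nlinarith [mul_le_mul_of_nonneg_left h1 hα0]
  unfold dbq
  rw [if_neg (by omega), max_eq_right hlb, min_eq_right hub]

lemma dbDens_eq {n : ℕ} (p α : ℝ) (x : Fin n → Bool) :
    dbDens p α x = dbP p α n x := by
  unfold dbDens dbP dbf
  exact Finset.prod_congr rfl fun k _ => by rw [if_pos k.isLt]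

lemma sum_dbP {n : ℕ} (p α : ℝ) :
    ∀ m, m ≤ n → ∑ x : Fin n → Bool, dbP p α m x = (2:ℝ)^(n-m) := by
  intro m
  induction m with
  | zero =>
    intro _
    simp [dbP]
  | succ m ih =>
    intro hm
    have hmn : m < n := hm
    have hstep : ∑ x : Fin n → Bool, dbP p α (m+1) x
        = ∑ x : Fin n → Bool, dbP p α m x * dbf p α ⟨m, hmn⟩ x :=
      Finset.sum_congr rfl fun x _ => dbP_succ p α hmn x
    rw [hstep, half_sum ⟨m, hmn⟩ _ _
      (fun x b => dbP_update p α ⟨m, hmn⟩ (le_refl m) x b)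
      (fun x => dbf_pair p α ⟨m, hmn⟩ x), ih (by omega)]
    have hsub : n - m = (n - (m+1)) + 1 := by omega
    rw [hsub, pow_succ]
    ring

lemma Q_of_S {n : ℕ} {p α : ℝ} (hp0 : 0 < p) (hp1 : p < 1) (hα0 : 0 ≤ α)
    (hα : α ≤ min ((1 - p) / p) (p / (1 - p))) (m : ℕ) (hm : m ≤ n)
    (hS : (∑ x : Fin n → Bool, dbP p α m x * phat x m)
        = if m = 0 then 0 else p * 2^(n-m)) :
    ∑ x : Fin n → Bool, dbP p α m x * dbq p α x m = p * 2^(n-m) := by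
  rcases Nat.eq_zero_or_pos m with h0 | h0
  · subst h0
    have : ∀ x : Fin n → Bool, dbq p α x 0 = p := fun x => if_pos rfl
    calc ∑ x : Fin n → Bool, dbP p α 0 x * dbq p α x 0
        = ∑ x : Fin n → Bool, p * dbP p α 0 x := by
          refine Finset.sum_congr rfl fun x _ => ?_
          rw [this x]; ring
      _ = p * ∑ x : Fin n → Bool, dbP p α 0 x := by rw [← Finset.mul_sum]
      _ = p * 2^(n-0) := by rw [sum_dbP p α 0 (by omega)]
  · have h0' : m ≠ 0 := by omega
    calc ∑ x : Fin n → Bool, dbP p α m x * dbq p α x m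
        = ∑ x : Fin n → Bool,
            (p * (1 + α) * dbP p α m x - α * (dbP p α m x * phat x m)) := by
          refine Finset.sum_congr rfl fun x _ => ?_
          rw [dbq_eq hp0 hp1 hα0 hα x h0]
          ring
      _ = p * (1 + α) * (∑ x : Fin n → Bool, dbP p α m x)
            - α * ∑ x : Fin n → Bool, dbP p α m x * phat x m := by
          rw [Finset.sum_sub_distrib, ← Finset.mul_sum, ← Finset.mul_sum]
      _ = p * 2^(n-m) := by
          rw [sum_dbP p α m hm, hS, if_neg h0']
          ring

lemma S_formula {n : ℕ} {p α : ℝ} (hp0 : 0 < p) (hp1 : p < 1) (hα0 : 0 ≤ α)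
    (hα : α ≤ min ((1 - p) / p) (p / (1 - p))) :
    ∀ m, m ≤ n → (∑ x : Fin n → Bool, dbP p α m x * phat x m)
      = if m = 0 then 0 else p * 2^(n-m) := by
  intro m
  induction m with
  | zero =>
    intro _
    simp [phat]
  | succ m ih =>
    intro hm
    have hmn : m < n := hm
    have hS := ih (le_of_lt hmn)
    have hQ := Q_of_S hp0 hp1 hα0 hα m (le_of_lt hmn) hS
    have key : ((m : ℝ) + 1) * (∑ x : Fin n → Bool, dbP p α (m+1) x * phat x (m+1))
        = (m : ℝ) * ((1/2) * ∑ x : Fin n → Bool, dbP p α m x * phat x m)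
          + (1/2) * ∑ x : Fin n → Bool, dbP p α m x * dbq p α x m := by
      rw [Finset.mul_sum]
      have e1 : ∀ x : Fin n → Bool,
          ((m : ℝ) + 1) * (dbP p α (m+1) x * phat x (m+1))
          = (m : ℝ) * ((dbP p α m x * phat x m) * dbf p α ⟨m, hmn⟩ x)
            + (dbP p α m x * dbq p α x m) * b2r (x ⟨m, hmn⟩) := by
        intro x
        rw [dbP_succ p α hmn x]
        have := phat_succ x hmn
        calc ((m : ℝ) + 1) * (dbP p α m x * dbf p α ⟨m, hmn⟩ x * phat x (m+1))
            = (dbP p α m x * dbf p α ⟨m, hmn⟩ x) * (((m : ℝ) + 1) * phat x (m+1)) := by ring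
          _ = (dbP p α m x * dbf p α ⟨m, hmn⟩ x) *
                ((m : ℝ) * phat x m + b2r (x ⟨m, hmn⟩)) := by rw [this]
          _ = (m : ℝ) * ((dbP p α m x * phat x m) * dbf p α ⟨m, hmn⟩ x)
                + dbP p α m x * (dbf p α ⟨m, hmn⟩ x * b2r (x ⟨m, hmn⟩)) := by ring
          _ = _ := by
              rw [dbf_mul_b2r p α ⟨m, hmn⟩ x]
              ring
      rw [Finset.sum_congr rfl (fun x _ => e1 x), Finset.sum_add_distrib,
        ← Finset.mul_sum]
      congr 1
      · congr 1
        exact half_sum ⟨m, hmn⟩ _ _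
          (fun x b => by
            rw [dbP_update p α ⟨m, hmn⟩ (le_refl m) x b,
              phat_update x ⟨m, hmn⟩ b (le_refl m)])
          (fun x => dbf_pair p α ⟨m, hmn⟩ x)
      · exact half_sum ⟨m, hmn⟩ _ _
          (fun x b => by
            rw [dbP_update p α ⟨m, hmn⟩ (le_refl m) x b,
              dbq_update p α x ⟨m, hmn⟩ b (le_refl m)])
          (fun x => b2r_pair ⟨m, hmn⟩ x)
    have hS' : (m : ℝ) * ((1/2) * ∑ x : Fin n → Bool, dbP p α m x * phat x m)
        = (m : ℝ) * ((1/2) * (p * 2^(n-m))) := by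
      rcases Nat.eq_zero_or_pos m with h0 | h0
      · subst h0; simp
      · rw [hS, if_neg (by omega)]
    rw [hS', hQ] at key
    have hne : ((m : ℝ) + 1) ≠ 0 := by positivity
    have hval : (∑ x : Fin n → Bool, dbP p α (m+1) x * phat x (m+1))
        = p * 2^(n-(m+1)) := by
      have hsub : n - m = (n - (m+1)) + 1 := by omega
      apply mul_left_cancel₀ hne
      rw [key, hsub, pow_succ]
      ring
    rw [hval, if_neg (by omega)]

/-- distribution preservation of DBsample (general n, 1-dimensional):
for 0 ≤ α ≤ min((1-p)/p, p/(1-p)), (i) no clipping ever occurs, i.e. the parameter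
at each step equals p(1+α) - α·p̂ of the previous samples, and (ii) each draw
has marginal expectation p. -/
theorem dbsample_preserves_distribution (p α : ℝ) (hp0 : 0 < p) (hp1 : p < 1)
    (hα0 : 0 ≤ α) (hα : α ≤ min ((1 - p) / p) (p / (1 - p))) (n : ℕ) :
    (∀ (x : Fin n → Bool) (k : ℕ), 1 ≤ k → k < n →
        dbq p α x k = p * (1 + α) - α * phat x k) ∧
      ∀ k : Fin n, ∑ x : Fin n → Bool, dbDens p α x * b2r (x k) = p := by
  constructor
  · intro x k hk _
    exact dbq_eq hp0 hp1 hα0 hα x hk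
  · intro k
    have hQk : ∑ x : Fin n → Bool, dbP p α (k:ℕ) x * dbq p α x (k:ℕ)
        = p * 2^(n-(k:ℕ)) :=
      Q_of_S hp0 hp1 hα0 hα (k:ℕ) (le_of_lt k.isLt)
        (S_formula hp0 hp1 hα0 hα (k:ℕ) (le_of_lt k.isLt))
    have T : ∀ m, (k:ℕ) < m → m ≤ n →
        ∑ x : Fin n → Bool, dbP p α m x * b2r (x k) = p * 2^(n-m) := by
      intro m
      induction m with
      | zero => intro h _; omega
      | succ m ih =>
        intro hkm hmn
        rcases Nat.lt_or_ge (k:ℕ) m with hk' | hk'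
        · -- inductive halving step
          have hmn' : m < n := hmn
          have hstep : ∑ x : Fin n → Bool, dbP p α (m+1) x * b2r (x k)
              = ∑ x : Fin n → Bool,
                  (dbP p α m x * b2r (x k)) * dbf p α ⟨m, hmn'⟩ x := by
            refine Finset.sum_congr rfl fun x _ => ?_
            rw [dbP_succ p α hmn' x]
            ring
          rw [hstep, half_sum ⟨m, hmn'⟩ _ _
            (fun x b => by
              have hne : k ≠ (⟨m, hmn'⟩ : Fin n) := by
                intro h
                rw [h] at hk'
                simp at hk'
              rw [dbP_update p α ⟨m, hmn'⟩ (le_refl m) x b,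
                Function.update_of_ne hne])
            (fun x => dbf_pair p α ⟨m, hmn'⟩ x),
            ih hk' (le_of_lt hmn')]
          have hsub : n - m = (n - (m+1)) + 1 := by omega
          rw [hsub, pow_succ]
          ring
        · -- base: m = k
          have hmk : m = (k:ℕ) := by omega
          subst hmk
          have hbase : ∑ x : Fin n → Bool, dbP p α ((k:ℕ)+1) x * b2r (x k)
              = ∑ x : Fin n → Bool,
                  (dbP p α (k:ℕ) x * dbq p α x (k:ℕ)) * b2r (x k) := by
            refine Finset.sum_congr rfl fun x _ => ?_
            rw [dbP_succ p α k.isLt x, Fin.eta k k.isLt, mul_assoc,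
              dbf_mul_b2r p α k x, ← mul_assoc]
          rw [hbase, half_sum k _ _
            (fun x b => by
              rw [dbP_update p α k (le_refl _) x b,
                dbq_update p α x k b (le_refl _)])
            (fun x => b2r_pair k x), hQk]
          have hsub : n - (k:ℕ) = (n - ((k:ℕ)+1)) + 1 := by omega
          rw [hsub, pow_succ]
          ring
    have htop := T n k.isLt (le_refl n)
    simp only [Nat.sub_self, pow_zero, mul_one] at htop
    calc ∑ x : Fin n → Bool, dbDens p α x * b2r (x k)
        = ∑ x : Fin n → Bool, dbP p α n x * b2r (x k) :=
          Finset.sum_congr rfl fun x _ => by rw [dbDens_eq]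
      _ = p := htop
end

section
/- Discrepancy reduction of DBsample (full version, 1-dimensional): let p ∈ (0,1), n ≥ 2, and 0 < α ≤ min((1-p)/p, p/(1-p)). Let x_1,...,x_n be i.i.d. Bernoulli(p) and let z_1,...,z_n be generated by the DBsample process (q_1 = p, z_k | z_1,...,z_{k-1} ~ Bernoulli(p(1+α) - α·p̂_{k-1}) with p̂_{k-1} = (1/(k-1))Σ_{j<k} z_j). Then E[((1/n)Σz_k - p)²] < E[((1/n)Σx_k - p)²]. -/
open Finset

namespace DBaux

lemma b2r_nonneg (b : Bool) : 0 ≤ b2r b := by unfold b2r; split <;> norm_num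

lemma b2r_le_one (b : Bool) : b2r b ≤ 1 := by unfold b2r; split <;> norm_num

lemma b2r_mul_self (b : Bool) : b2r b * b2r b = b2r b := by unfold b2r; split <;> norm_num

lemma sum_fin_lt {n : ℕ} {m : ℕ} (hm : m ≤ n) (f : ℕ → ℝ) :
    (∑ j : Fin n, if (j : ℕ) < m then f (j : ℕ) else 0) = ∑ j ∈ range m, f j := by
  rw [Fin.sum_univ_eq_sum_range (fun j => if j < m then f j else 0) n]
  rw [← Finset.sum_subset (Finset.range_subset_range.mpr hm)]
  · exact Finset.sum_congr rfl fun j hj => if_pos (mem_range.mp hj)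
  · intro j _ hj
    exact if_neg (fun h => hj (mem_range.mpr h))

lemma phat_eq {n : ℕ} (x : Fin n → Bool) (k : ℕ) :
    phat x k = (k : ℝ)⁻¹ * ∑ j : Fin n, if (j : ℕ) < k then b2r (x j) else 0 := by
  unfold phat b2r
  congr 1
  refine Finset.sum_congr rfl fun j _ => ?_
  by_cases h1 : (j : ℕ) < k <;> by_cases h2 : x j <;> simp [h1, h2]

lemma phat_nonneg {n : ℕ} (x : Fin n → Bool) (k : ℕ) : 0 ≤ phat x k := by
  rw [phat_eq]
  refine mul_nonneg (by positivity) (Finset.sum_nonneg fun j _ => ?_)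
  split
  · exact b2r_nonneg _
  · exact le_rfl

lemma phat_le_one {n : ℕ} (x : Fin n → Bool) {k : ℕ} (hk : 0 < k) (hkn : k ≤ n) :
    phat x k ≤ 1 := by
  rw [phat_eq]
  have h1 : (∑ j : Fin n, if (j : ℕ) < k then b2r (x j) else 0) ≤ (k : ℝ) := by
    have step1 : (∑ j : Fin n, if (j : ℕ) < k then b2r (x j) else 0)
        ≤ ∑ j : Fin n, (if (j : ℕ) < k then (1:ℝ) else 0) := by
      refine Finset.sum_le_sum fun j _ => ?_
      split
      · exact b2r_le_one _
      · exact le_rfl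
    have step2 : (∑ j : Fin n, if (j : ℕ) < k then (1:ℝ) else 0) = (k : ℝ) := by
      rw [sum_fin_lt hkn (fun _ => (1:ℝ))]; simp
    linarith
  have hk' : (0:ℝ) < (k:ℝ) := by exact_mod_cast hk
  have := mul_le_mul_of_nonneg_left h1 (inv_nonneg.mpr hk'.le)
  have hik : (k:ℝ)⁻¹ * (k:ℝ) = 1 := inv_mul_cancel₀ hk'.ne'
  linarith

lemma dbq_eq {n : ℕ} {p α : ℝ} (hp0 : 0 < p) (hp1 : p < 1) (ha0 : 0 ≤ α)
    (hap : α * p ≤ 1 - p) (ha1p : α * (1 - p) ≤ p)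
    (x : Fin n → Bool) {k : ℕ} (hk : k ≤ n) :
    dbq p α x k = if k = 0 then p else p * (1 + α) - α * phat x k := by
  unfold dbq
  by_cases h0 : k = 0
  · simp [h0]
  · have hkpos : 0 < k := Nat.pos_of_ne_zero h0
    have h1 : phat x k ≤ 1 := phat_le_one x hkpos hk
    have h2 : 0 ≤ phat x k := phat_nonneg x k
    have hub : p * (1 + α) - α * phat x k ≤ 1 := by nlinarith
    have hlb : 0 ≤ p * (1 + α) - α * phat x k := by nlinarith
    rw [if_neg h0, if_neg h0, max_eq_right hlb, min_eq_right hub]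

lemma dbq_mem {n : ℕ} {p α : ℝ} (hp0 : 0 < p) (hp1 : p < 1)
    (x : Fin n → Bool) (k : ℕ) : 0 ≤ dbq p α x k ∧ dbq p α x k ≤ 1 := by
  unfold dbq
  split
  · constructor <;> linarith
  · exact ⟨le_min (by norm_num) (le_max_left _ _), min_le_left _ _⟩

lemma phat_congr {n : ℕ} {x y : Fin n → Bool} {k : ℕ}
    (h : ∀ j : Fin n, (j : ℕ) < k → x j = y j) : phat x k = phat y k := by
  unfold phat
  congr 1
  refine Finset.sum_congr rfl fun j _ => ?_
  by_cases hj : (j : ℕ) < k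
  · rw [h j hj]
  · simp [hj]

lemma dbq_congr {n : ℕ} (p α : ℝ) {x y : Fin n → Bool} {k : ℕ}
    (h : ∀ j : Fin n, (j : ℕ) < k → x j = y j) : dbq p α x k = dbq p α y k := by
  unfold dbq
  rw [phat_congr h]

end DBaux

namespace DBaux

variable {n : ℕ}

/-- Flip coordinate `i`. -/
def flipAt (i : Fin n) (x : Fin n → Bool) : Fin n → Bool :=
  Function.update x i (!(x i))

lemma flipAt_apply_ne {i j : Fin n} (h : j ≠ i) (x : Fin n → Bool) :
    flipAt i x j = x j := Function.update_of_ne h _ _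

lemma flipAt_apply_self (i : Fin n) (x : Fin n → Bool) :
    flipAt i x i = !(x i) := Function.update_self _ _ _

lemma flipAt_involutive (i : Fin n) : Function.Involutive (flipAt i) := by
  intro x
  unfold flipAt
  rw [Function.update_self, Function.update_idem, Bool.not_not, Function.update_eq_self]

lemma sum_flip (i : Fin n) (F : (Fin n → Bool) → ℝ) :
    ∑ x : Fin n → Bool, F (flipAt i x) = ∑ x : Fin n → Bool, F x :=
  Equiv.sum_comp ((flipAt_involutive i).toPerm _) F

/-- Pairing lemma 1: integrating out a Bernoulli factor. -/
lemma sum_dens_mul (i : Fin n) (q G : (Fin n → Bool) → ℝ)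
    (hq : ∀ x, q (flipAt i x) = q x) (hG : ∀ x, G (flipAt i x) = G x) :
    ∑ x : Fin n → Bool, (if x i then q x else 1 - q x) * G x
      = 2⁻¹ * ∑ x : Fin n → Bool, G x := by
  have hterm : ∀ x : Fin n → Bool,
      (if x i then q x else 1 - q x) * G x
        + (if flipAt i x i then q (flipAt i x) else 1 - q (flipAt i x)) * G (flipAt i x)
      = G x := by
    intro x
    rw [hq, hG, flipAt_apply_self]
    cases hxi : x i <;> simp [hxi] <;> ring
  have h2 : (2:ℝ) * ∑ x : Fin n → Bool, (if x i then q x else 1 - q x) * G x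
      = ∑ x : Fin n → Bool, G x := by
    rw [two_mul]
    nth_rewrite 2 [← sum_flip i (fun x => (if x i then q x else 1 - q x) * G x)]
    rw [← Finset.sum_add_distrib]
    exact Finset.sum_congr rfl fun x _ => hterm x
  linarith

/-- Pairing lemma 2: integrating out a Bernoulli factor against its value. -/
lemma sum_dens_b2r_mul (i : Fin n) (q G : (Fin n → Bool) → ℝ)
    (hq : ∀ x, q (flipAt i x) = q x) (hG : ∀ x, G (flipAt i x) = G x) :
    ∑ x : Fin n → Bool, (if x i then q x else 1 - q x) * (b2r (x i) * G x)
      = 2⁻¹ * ∑ x : Fin n → Bool, q x * G x := by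
  have hterm : ∀ x : Fin n → Bool,
      (if x i then q x else 1 - q x) * (b2r (x i) * G x)
        + (if flipAt i x i then q (flipAt i x) else 1 - q (flipAt i x))
            * (b2r (flipAt i x i) * G (flipAt i x))
      = q x * G x := by
    intro x
    rw [hq, hG, flipAt_apply_self]
    cases hxi : x i <;> simp [hxi, b2r] <;> ring
  have h2 : (2:ℝ) * ∑ x : Fin n → Bool, (if x i then q x else 1 - q x) * (b2r (x i) * G x)
      = ∑ x : Fin n → Bool, q x * G x := by
    rw [two_mul]
    nth_rewrite 2 [← sum_flip i (fun x => (if x i then q x else 1 - q x) * (b2r (x i) * G x))]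
    rw [← Finset.sum_add_distrib]
    exact Finset.sum_congr rfl fun x _ => hterm x
  linarith

/-- Partial density: coordinates `< m` carry the DBsample density, the rest uniform. -/
noncomputable def mu (p α : ℝ) (m : ℕ) (x : Fin n → Bool) : ℝ :=
  ∏ k : Fin n, if (k : ℕ) < m then
    (if x k then dbq p α x (k : ℕ) else 1 - dbq p α x (k : ℕ)) else 2⁻¹

lemma mu_n (p α : ℝ) (x : Fin n → Bool) : mu p α n x = dbDens p α x :=
  Finset.prod_congr rfl fun k _ => if_pos k.isLt

lemma mu_succ (p α : ℝ) {m : ℕ} (hm : m < n) (x : Fin n → Bool) :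
    mu p α (m + 1) x
      = 2 * ((if x ⟨m, hm⟩ then dbq p α x m else 1 - dbq p α x m) * mu p α m x) := by
  set i : Fin n := ⟨m, hm⟩ with hi
  unfold mu
  rw [← Finset.mul_prod_erase univ _ (mem_univ i), ← Finset.mul_prod_erase univ _ (mem_univ i)]
  have hprod : (∏ k ∈ univ.erase i, if (k : ℕ) < m + 1 then
        (if x k then dbq p α x (k : ℕ) else 1 - dbq p α x (k : ℕ)) else 2⁻¹)
      = ∏ k ∈ univ.erase i, if (k : ℕ) < m then
        (if x k then dbq p α x (k : ℕ) else 1 - dbq p α x (k : ℕ)) else 2⁻¹ := by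
    refine Finset.prod_congr rfl fun k hk => ?_
    have hkm : (k : ℕ) ≠ m := fun h => (mem_erase.mp hk).1 (Fin.ext (by simp [h, hi]))
    exact if_congr (by omega) rfl rfl
  rw [hprod]
  have h1 : ((i : ℕ) < m + 1) := by simp [hi]
  have h2 : ¬ ((i : ℕ) < m) := by simp [hi]
  rw [if_pos h1, if_neg h2]
  have : (i : ℕ) = m := by simp [hi]
  rw [this]
  ring

lemma dbq_flip (p α : ℝ) {i : Fin n} {k : ℕ} (hk : k ≤ (i : ℕ)) (x : Fin n → Bool) :
    dbq p α (flipAt i x) k = dbq p α x k := by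
  refine dbq_congr p α fun j hj => ?_
  exact flipAt_apply_ne (fun h => by subst h; omega) x

lemma mu_flip (p α : ℝ) {i : Fin n} {m : ℕ} (hm : m ≤ (i : ℕ)) (x : Fin n → Bool) :
    mu p α m (flipAt i x) = mu p α m x := by
  unfold mu
  refine Finset.prod_congr rfl fun k _ => ?_
  by_cases hk : (k : ℕ) < m
  · have hki : k ≠ i := fun h => by subst h; omega
    rw [if_pos hk, if_pos hk, flipAt_apply_ne hki, dbq_flip p α (by omega)]
  · rw [if_neg hk, if_neg hk]

lemma b2r_flip {i j : Fin n} (h : j ≠ i) (x : Fin n → Bool) :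
    b2r (flipAt i x j) = b2r (x j) := by rw [flipAt_apply_ne h]

/-- One-step marginalization. -/
lemma drop1 (p α : ℝ) {m : ℕ} (hm : m < n) (f : (Fin n → Bool) → ℝ)
    (hf : ∀ x, f (flipAt ⟨m, hm⟩ x) = f x) :
    ∑ x : Fin n → Bool, mu p α (m + 1) x * f x = ∑ x : Fin n → Bool, mu p α m x * f x := by
  have step : ∀ x : Fin n → Bool, mu p α (m+1) x * f x
      = 2 * ((if x ⟨m, hm⟩ then dbq p α x m else 1 - dbq p α x m) * (mu p α m x * f x)) := by
    intro x; rw [mu_succ p α hm]; ring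
  rw [Finset.sum_congr rfl fun x _ => step x, ← Finset.mul_sum]
  rw [sum_dens_mul ⟨m, hm⟩ (fun x => dbq p α x m) (fun x => mu p α m x * f x)
      (fun x => dbq_flip p α le_rfl x)
      (fun x => by
        show mu p α m (flipAt ⟨m, hm⟩ x) * f (flipAt ⟨m, hm⟩ x) = mu p α m x * f x
        rw [mu_flip p α (m := m) (i := ⟨m, hm⟩) le_rfl x, hf x])]
  rw [← mul_assoc]
  norm_num

/-- One-step conditional expectation. -/
lemma drop2 (p α : ℝ) {m : ℕ} (hm : m < n) (f : (Fin n → Bool) → ℝ)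
    (hf : ∀ x, f (flipAt ⟨m, hm⟩ x) = f x) :
    ∑ x : Fin n → Bool, mu p α (m + 1) x * (b2r (x ⟨m, hm⟩) * f x)
      = ∑ x : Fin n → Bool, mu p α m x * (dbq p α x m * f x) := by
  have step : ∀ x : Fin n → Bool, mu p α (m+1) x * (b2r (x ⟨m, hm⟩) * f x)
      = 2 * ((if x ⟨m, hm⟩ then dbq p α x m else 1 - dbq p α x m)
          * (b2r (x ⟨m, hm⟩) * (mu p α m x * f x))) := by
    intro x; rw [mu_succ p α hm]; ring
  rw [Finset.sum_congr rfl fun x _ => step x, ← Finset.mul_sum]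
  rw [sum_dens_b2r_mul ⟨m, hm⟩ (fun x => dbq p α x m) (fun x => mu p α m x * f x)
      (fun x => dbq_flip p α le_rfl x)
      (fun x => by
        show mu p α m (flipAt ⟨m, hm⟩ x) * f (flipAt ⟨m, hm⟩ x) = mu p α m x * f x
        rw [mu_flip p α (m := m) (i := ⟨m, hm⟩) le_rfl x, hf x])]
  rw [← mul_assoc]
  norm_num
  exact Finset.sum_congr rfl fun x _ => by ring

/-- Iterated marginalization. -/
lemma dropTo (p α : ℝ) {m m' : ℕ} (h : m ≤ m') (h' : m' ≤ n) (f : (Fin n → Bool) → ℝ)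
    (hf : ∀ i : Fin n, m ≤ (i : ℕ) → ∀ x, f (flipAt i x) = f x) :
    ∑ x : Fin n → Bool, mu p α m' x * f x = ∑ x : Fin n → Bool, mu p α m x * f x := by
  induction m', h using Nat.le_induction with
  | base => rfl
  | succ m' hm ih =>
      have hm'n : m' < n := by omega
      rw [drop1 p α hm'n f (hf ⟨m', hm'n⟩ (by simpa using hm))]
      exact ih (by omega)

lemma mass (p α : ℝ) {m : ℕ} (hm : m ≤ n) : ∑ x : Fin n → Bool, mu p α m x = 1 := by
  have h0 : ∀ x : Fin n → Bool, mu p α 0 x = (2⁻¹ : ℝ) ^ n := by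
    intro x
    unfold mu
    rw [Finset.prod_congr rfl fun k _ => if_neg (by omega)]
    simp
  have := dropTo p α (Nat.zero_le m) hm (fun _ => 1) (fun i _ x => rfl)
  simp only [mul_one] at this
  rw [this, Finset.sum_congr rfl fun x _ => h0 x, Finset.sum_const, card_univ]
  simp only [nsmul_eq_mul]
  rw [Fintype.card_fun]
  simp only [Fintype.card_bool, Fintype.card_fin]
  push_cast
  rw [← mul_pow]
  norm_num

end DBaux

namespace DBaux

variable {n : ℕ}

/-- First moment E[z_k]. -/
noncomputable def ez (p α : ℝ) (k : Fin n) : ℝ :=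
  ∑ x : Fin n → Bool, mu p α n x * b2r (x k)

/-- Second moment E[z_k z_ℓ]. -/
noncomputable def e2 (p α : ℝ) (k ℓ : Fin n) : ℝ :=
  ∑ x : Fin n → Bool, mu p α n x * (b2r (x k) * b2r (x ℓ))

lemma ez_eq (p α : ℝ) {k : Fin n} {m : ℕ} (hm : (k : ℕ) < m) (hmn : m ≤ n) :
    ∑ x : Fin n → Bool, mu p α m x * b2r (x k) = ez p α k := by
  have h1 := dropTo p α (m := (k : ℕ) + 1) (m' := m) hm hmn (fun x => b2r (x k))
    (fun i hi x => b2r_flip (fun h => by subst h; omega) x)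
  have h2 := dropTo p α (m := (k : ℕ) + 1) (m' := n) k.isLt le_rfl (fun x => b2r (x k))
    (fun i hi x => b2r_flip (fun h => by subst h; omega) x)
  unfold ez
  rw [h1, h2]

lemma e2_eq (p α : ℝ) {k ℓ : Fin n} {m : ℕ} (hk : (k : ℕ) < m) (hl : (ℓ : ℕ) < m)
    (hmn : m ≤ n) :
    ∑ x : Fin n → Bool, mu p α m x * (b2r (x k) * b2r (x ℓ)) = e2 p α k ℓ := by
  set M : ℕ := max (k : ℕ) (ℓ : ℕ) + 1 with hM
  have hinv : ∀ i : Fin n, M ≤ (i : ℕ) → ∀ x : Fin n → Bool,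
      b2r (flipAt i x k) * b2r (flipAt i x ℓ) = b2r (x k) * b2r (x ℓ) := by
    intro i hi x
    rw [b2r_flip (fun h => by subst h; omega) x, b2r_flip (fun h => by subst h; omega) x]
  have h1 := dropTo p α (m := M) (m' := m) (by omega) hmn
    (fun x => b2r (x k) * b2r (x ℓ)) hinv
  have h2 := dropTo p α (m := M) (m' := n) (by omega) le_rfl
    (fun x => b2r (x k) * b2r (x ℓ)) hinv
  unfold e2
  rw [h1, h2]

lemma e2_symm (p α : ℝ) (k ℓ : Fin n) : e2 p α k ℓ = e2 p α ℓ k := by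
  unfold e2
  exact Finset.sum_congr rfl fun x _ => by ring

/-- E[z_k] = p. -/
lemma ez_val {p α : ℝ} (hp0 : 0 < p) (hp1 : p < 1) (ha0 : 0 ≤ α)
    (hap : α * p ≤ 1 - p) (ha1p : α * (1 - p) ≤ p) (k : Fin n) :
    ez p α k = p := by
  suffices key : ∀ N : ℕ, ∀ k : Fin n, (k : ℕ) = N → ez p α k = p by
    exact key (k : ℕ) k rfl
  intro N
  induction N using Nat.strong_induction_on with
  | _ N ih =>
    intro k hk
    have hkn : (k : ℕ) < n := k.isLt
    have step1 : ez p α k = ∑ x : Fin n → Bool, mu p α ((k : ℕ) + 1) x * b2r (x k) :=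
      (ez_eq p α (Nat.lt_succ_self _) (by omega)).symm
    have step2 : ∑ x : Fin n → Bool, mu p α ((k : ℕ) + 1) x * b2r (x k)
        = ∑ x : Fin n → Bool, mu p α (k : ℕ) x * dbq p α x (k : ℕ) := by
      have := drop2 p α (m := (k : ℕ)) hkn (fun _ => 1) (fun x => rfl)
      simp only [mul_one] at this
      rw [← this]
    rw [step1, step2]
    by_cases h0 : (k : ℕ) = 0
    · have : ∀ x : Fin n → Bool, dbq p α x (k : ℕ) = p := by
        intro x; unfold dbq; rw [if_pos h0]
      rw [Finset.sum_congr rfl fun x _ => by rw [this x]]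
      rw [← Finset.sum_mul, mass p α (by omega), one_mul]
    · -- expand dbq
      have hkpos : 0 < (k : ℕ) := Nat.pos_of_ne_zero h0
      have hkr : ((k : ℕ) : ℝ) ≠ 0 := by positivity
      have hexp : ∀ x : Fin n → Bool, mu p α (k : ℕ) x * dbq p α x (k : ℕ)
          = p * (1 + α) * mu p α (k : ℕ) x
            - α * ((k : ℕ) : ℝ)⁻¹ * ∑ j : Fin n,
                (if (j : ℕ) < (k : ℕ) then mu p α (k : ℕ) x * b2r (x j) else 0) := by
        intro x
        rw [dbq_eq hp0 hp1 ha0 hap ha1p x (le_of_lt hkn), if_neg h0, phat_eq]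
        have hS : mu p α (k:ℕ) x * ∑ j : Fin n, (if (j:ℕ) < (k:ℕ) then b2r (x j) else 0)
            = ∑ j : Fin n, (if (j:ℕ) < (k:ℕ) then mu p α (k:ℕ) x * b2r (x j) else 0) := by
          rw [Finset.mul_sum]
          exact Finset.sum_congr rfl fun j _ => by split <;> ring
        rw [show mu p α (k:ℕ) x * (p * (1 + α) - α * (((k:ℕ):ℝ)⁻¹
              * ∑ j : Fin n, (if (j:ℕ) < (k:ℕ) then b2r (x j) else 0)))
            = p * (1 + α) * mu p α (k:ℕ) x - α * ((k:ℕ):ℝ)⁻¹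
              * (mu p α (k:ℕ) x * ∑ j : Fin n, (if (j:ℕ) < (k:ℕ) then b2r (x j) else 0))
          from by ring, hS]
      rw [Finset.sum_congr rfl fun x _ => hexp x, Finset.sum_sub_distrib,
        ← Finset.mul_sum, mass p α (le_of_lt hkn), ← Finset.mul_sum, Finset.sum_comm]
      have hinner : ∀ j : Fin n, (∑ x : Fin n → Bool,
          (if (j : ℕ) < (k : ℕ) then mu p α (k : ℕ) x * b2r (x j) else 0))
          = (if (j : ℕ) < (k : ℕ) then p else 0) := by
        intro j
        by_cases hj : (j : ℕ) < (k : ℕ)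
        · simp only [if_pos hj]
          rw [ez_eq p α hj (le_of_lt hkn)]
          exact ih (j : ℕ) (by omega) j rfl
        · simp [hj]
      rw [Finset.sum_congr rfl fun j _ => hinner j,
        sum_fin_lt (le_of_lt hkn) (fun _ => p), Finset.sum_const, Finset.card_range]
      simp only [nsmul_eq_mul]
      field_simp
      ring
end DBaux

namespace DBaux

variable {n : ℕ}

lemma e2_diag {p α : ℝ} (hp0 : 0 < p) (hp1 : p < 1) (ha0 : 0 ≤ α)
    (hap : α * p ≤ 1 - p) (ha1p : α * (1 - p) ≤ p) (k : Fin n) :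
    e2 p α k k = p := by
  have : e2 p α k k = ez p α k := by
    unfold e2 ez
    exact Finset.sum_congr rfl fun x _ => by rw [b2r_mul_self]
  rw [this, ez_val hp0 hp1 ha0 hap ha1p]

lemma e2_rec {p α : ℝ} (hp0 : 0 < p) (hp1 : p < 1) (ha0 : 0 ≤ α)
    (hap : α * p ≤ 1 - p) (ha1p : α * (1 - p) ≤ p) {k ℓ : Fin n}
    (hkl : (k : ℕ) < (ℓ : ℕ)) :
    e2 p α k ℓ = p * (p * (1 + α)) - α * (((ℓ : ℕ) : ℝ))⁻¹
      * ∑ j : Fin n, (if (j : ℕ) < (ℓ : ℕ) then e2 p α k j else 0) := by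
  have hln : (ℓ : ℕ) < n := ℓ.isLt
  have hlpos : 0 < (ℓ : ℕ) := by omega
  have hl0 : ¬ ((ℓ : ℕ) = 0) := by omega
  have hdrop := drop2 p α (m := (ℓ : ℕ)) hln (fun x => b2r (x k))
      (fun x => b2r_flip (fun h => by
        have := congrArg Fin.val h; simp only [Fin.val_mk] at this; omega) x)
  simp only [Fin.eta] at hdrop
  have step1 : e2 p α k ℓ = ∑ x : Fin n → Bool,
      mu p α ((ℓ : ℕ) + 1) x * (b2r (x ℓ) * b2r (x k)) := by
    rw [← e2_eq p α (k := k) (ℓ := ℓ) (m := (ℓ : ℕ) + 1) (by omega) (by omega) (by omega)]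
    exact Finset.sum_congr rfl fun x _ => by ring
  rw [step1, hdrop]
  have hexp : ∀ x : Fin n → Bool, mu p α (ℓ : ℕ) x * (dbq p α x (ℓ : ℕ) * b2r (x k))
      = p * (1 + α) * (mu p α (ℓ : ℕ) x * b2r (x k))
        - α * (((ℓ : ℕ) : ℝ))⁻¹ * ∑ j : Fin n,
            (if (j : ℕ) < (ℓ : ℕ) then mu p α (ℓ : ℕ) x * (b2r (x k) * b2r (x j)) else 0) := by
    intro x
    rw [dbq_eq hp0 hp1 ha0 hap ha1p x (le_of_lt hln), if_neg hl0, phat_eq]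
    have hS : mu p α (ℓ:ℕ) x * b2r (x k)
          * ∑ j : Fin n, (if (j:ℕ) < (ℓ:ℕ) then b2r (x j) else 0)
        = ∑ j : Fin n, (if (j:ℕ) < (ℓ:ℕ) then mu p α (ℓ:ℕ) x * (b2r (x k) * b2r (x j)) else 0) := by
      rw [Finset.mul_sum]
      exact Finset.sum_congr rfl fun j _ => by split <;> ring
    rw [show mu p α (ℓ:ℕ) x * ((p * (1 + α) - α * ((((ℓ:ℕ)):ℝ)⁻¹
          * ∑ j : Fin n, (if (j:ℕ) < (ℓ:ℕ) then b2r (x j) else 0))) * b2r (x k))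
        = p * (1 + α) * (mu p α (ℓ:ℕ) x * b2r (x k)) - α * (((ℓ:ℕ):ℝ))⁻¹
          * (mu p α (ℓ:ℕ) x * b2r (x k)
              * ∑ j : Fin n, (if (j:ℕ) < (ℓ:ℕ) then b2r (x j) else 0))
      from by ring, hS]
  rw [Finset.sum_congr rfl fun x _ => hexp x, Finset.sum_sub_distrib,
    ← Finset.mul_sum, ez_eq p α (by omega : (k:ℕ) < (ℓ:ℕ)) (le_of_lt hln),
    ez_val hp0 hp1 ha0 hap ha1p, ← Finset.mul_sum, Finset.sum_comm]
  have hinner : ∀ j : Fin n, (∑ x : Fin n → Bool,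
      (if (j : ℕ) < (ℓ : ℕ) then mu p α (ℓ : ℕ) x * (b2r (x k) * b2r (x j)) else 0))
      = (if (j : ℕ) < (ℓ : ℕ) then e2 p α k j else 0) := by
    intro j
    by_cases hj : (j : ℕ) < (ℓ : ℕ)
    · simp only [if_pos hj]
      exact e2_eq p α (by omega) hj (le_of_lt hln)
    · simp [hj]
  rw [Finset.sum_congr rfl fun j _ => hinner j]
  ring

end DBaux

namespace DBaux

variable {n : ℕ}

/-- Partial covariance sum S(k,ℓ). -/
noncomputable def covS (p α : ℝ) (k : Fin n) (ℓ : ℕ) : ℝ :=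
  ∑ j : Fin n, if (j : ℕ) < ℓ ∧ j ≠ k then e2 p α k j - p * p else 0

lemma cov_rec {p α : ℝ} (hp0 : 0 < p) (hp1 : p < 1) (ha0 : 0 ≤ α)
    (hap : α * p ≤ 1 - p) (ha1p : α * (1 - p) ≤ p) {k ℓ : Fin n}
    (hkl : (k : ℕ) < (ℓ : ℕ)) :
    e2 p α k ℓ - p * p
      = -(α / (((ℓ : ℕ) : ℝ))) * (p * (1 - p) + covS p α k (ℓ : ℕ)) := by
  have hlpos : 0 < (ℓ : ℕ) := by omega
  have hlr : (0:ℝ) < ((ℓ : ℕ) : ℝ) := by exact_mod_cast hlpos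
  have hterm : ∀ j : Fin n,
      (if (j : ℕ) < (ℓ : ℕ) then e2 p α k j else 0)
        = (if (j : ℕ) < (ℓ : ℕ) ∧ j ≠ k then e2 p α k j - p * p else 0)
          + ((if (j : ℕ) < (ℓ : ℕ) then p * p else 0) - (if j = k then p * p else 0))
          + (if j = k then p else 0) := by
    intro j
    by_cases hj : j = k
    · subst hj
      simp only [if_pos rfl, if_pos hkl]
      rw [if_neg (fun h => h.2 rfl), e2_diag hp0 hp1 ha0 hap ha1p]
      simp
    · simp only [if_neg hj]
      by_cases hjl : (j : ℕ) < (ℓ : ℕ)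
      · rw [if_pos hjl, if_pos hjl, if_pos ⟨hjl, hj⟩]; ring
      · rw [if_neg hjl, if_neg hjl, if_neg (fun h => hjl h.1)]; ring
  have hsum : (∑ j : Fin n, if (j : ℕ) < (ℓ : ℕ) then e2 p α k j else 0)
      = covS p α k (ℓ : ℕ) + (((ℓ : ℕ) : ℝ) * (p * p) - p * p) + p := by
    rw [Finset.sum_congr rfl fun j _ => hterm j, Finset.sum_add_distrib,
      Finset.sum_add_distrib, Finset.sum_sub_distrib]
    have h1 : (∑ j : Fin n, if (j : ℕ) < (ℓ : ℕ) then p * p else 0)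
        = ((ℓ : ℕ) : ℝ) * (p * p) := by
      rw [sum_fin_lt (le_of_lt ℓ.isLt) (fun _ => p * p), Finset.sum_const,
        Finset.card_range, nsmul_eq_mul]
    have h2 : (∑ j : Fin n, if j = k then p * p else 0) = p * p := by
      rw [Finset.sum_ite_eq' univ k (fun _ => p * p)]
      simp
    have h3 : (∑ j : Fin n, if j = k then p else 0) = p := by
      rw [Finset.sum_ite_eq' univ k (fun _ => p)]
      simp
    rw [h1, h2, h3]
    rfl
  have hrec := e2_rec hp0 hp1 ha0 hap ha1p hkl
  rw [hsum] at hrec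
  rw [hrec]
  field_simp
  ring

lemma covS_bounds {p α : ℝ} (hp0 : 0 < p) (hp1 : p < 1) (ha0 : 0 ≤ α)
    (hap : α * p ≤ 1 - p) (ha1p : α * (1 - p) ≤ p) (ha1 : α ≤ 1) :
    ∀ ℓ : ℕ, ℓ ≤ n → ∀ k : Fin n, (k : ℕ) < ℓ →
      -(p * (1 - p)) ≤ covS p α k ℓ ∧ covS p α k ℓ ≤ 0 := by
  have hc : 0 ≤ p * (1 - p) := by nlinarith
  intro ℓ
  induction ℓ using Nat.strong_induction_on with
  | _ ℓ ih =>
    intro hln k hk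
    by_cases hcase : ℓ = (k : ℕ) + 1
    · -- base case ℓ = k+1
      subst hcase
      have hsplit : covS p α k ((k : ℕ) + 1)
          = ∑ j : Fin n, (if (j : ℕ) < (k : ℕ) then e2 p α k j - p * p else 0) := by
        unfold covS
        refine Finset.sum_congr rfl fun j _ => ?_
        refine if_congr ?_ rfl rfl
        rw [Ne, Fin.ext_iff]
        omega
      by_cases hk0 : (k : ℕ) = 0
      · rw [hsplit]
        have : ∀ j : Fin n, (if (j : ℕ) < (k : ℕ) then e2 p α k j - p * p else 0) = 0 := by
          intro j; rw [if_neg (by omega)]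
        rw [Finset.sum_congr rfl fun j _ => this j, Finset.sum_const, smul_zero]
        constructor <;> linarith
      · have hkpos : 0 < (k : ℕ) := Nat.pos_of_ne_zero hk0
        have hkr : (0:ℝ) < ((k : ℕ) : ℝ) := by exact_mod_cast hkpos
        have htb : ∀ j : Fin n, (j : ℕ) < (k : ℕ) →
            -(α / ((k : ℕ) : ℝ)) * (p * (1 - p)) ≤ e2 p α k j - p * p
              ∧ e2 p α k j - p * p ≤ 0 := by
          intro j hjk
          have hSj := ih (k : ℕ) (by omega) (by omega) j hjk
          have hcr := cov_rec hp0 hp1 ha0 hap ha1p (k := j) (ℓ := k) hjk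
          rw [e2_symm p α k j, hcr]
          have ht0 : 0 ≤ α / ((k : ℕ) : ℝ) := by positivity
          constructor
          · nlinarith [hSj.2]
          · nlinarith [hSj.1]
        rw [hsplit]
        constructor
        · have hlow : ∀ j : Fin n,
              (if (j : ℕ) < (k : ℕ) then -(α / ((k : ℕ) : ℝ)) * (p * (1 - p)) else 0)
                ≤ (if (j : ℕ) < (k : ℕ) then e2 p α k j - p * p else 0) := by
            intro j
            by_cases hj : (j : ℕ) < (k : ℕ)
            · rw [if_pos hj, if_pos hj]; exact (htb j hj).1
            · rw [if_neg hj, if_neg hj]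
          have := Finset.sum_le_sum (fun j (_ : j ∈ univ) => hlow j)
          rw [sum_fin_lt (le_of_lt k.isLt)
            (fun _ => -(α / ((k : ℕ) : ℝ)) * (p * (1 - p))), Finset.sum_const,
            Finset.card_range, nsmul_eq_mul] at this
          have heq : ((k : ℕ) : ℝ) * (-(α / ((k : ℕ) : ℝ)) * (p * (1 - p)))
              = -α * (p * (1 - p)) := by field_simp
          rw [heq] at this
          nlinarith
        · refine Finset.sum_nonpos fun j _ => ?_
          by_cases hj : (j : ℕ) < (k : ℕ)
          · rw [if_pos hj]; exact (htb j hj).2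
          · rw [if_neg hj]
    · -- inductive case ℓ > k+1
      have hm : (k : ℕ) + 1 < ℓ := by omega
      set m : ℕ := ℓ - 1 with hmdef
      have hmn : m < n := by omega
      have hkm : (k : ℕ) < m := by omega
      have hmpos : 0 < m := by omega
      have hmr : (0:ℝ) < ((m : ℕ) : ℝ) := by exact_mod_cast hmpos
      have hsplit : covS p α k ℓ
          = covS p α k m + (e2 p α k ⟨m, hmn⟩ - p * p) := by
        unfold covS
        have hterm : ∀ j : Fin n,
            (if (j : ℕ) < ℓ ∧ j ≠ k then e2 p α k j - p * p else 0)
              = (if (j : ℕ) < m ∧ j ≠ k then e2 p α k j - p * p else 0)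
                + (if j = ⟨m, hmn⟩ then e2 p α k j - p * p else 0) := by
          intro j
          by_cases hjm : (j : ℕ) = m
          · have hj : j = ⟨m, hmn⟩ := Fin.ext hjm
            have hjk : j ≠ k := by rw [Ne, Fin.ext_iff]; omega
            rw [if_pos ⟨by omega, hjk⟩, if_neg (by omega : ¬((j:ℕ) < m ∧ j ≠ k)), if_pos hj]
            ring
          · have hjne : j ≠ ⟨m, hmn⟩ := fun h => hjm (by rw [h])
            rw [if_neg hjne, add_zero]
            refine if_congr ?_ rfl rfl
            constructor
            · rintro ⟨h1, h2⟩; exact ⟨by omega, h2⟩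
            · rintro ⟨h1, h2⟩; exact ⟨by omega, h2⟩
        rw [Finset.sum_congr rfl fun j _ => hterm j, Finset.sum_add_distrib,
          Finset.sum_ite_eq' univ (⟨m, hmn⟩ : Fin n) (fun j => e2 p α k j - p * p)]
        simp
      have hcr := cov_rec hp0 hp1 ha0 hap ha1p (k := k) (ℓ := ⟨m, hmn⟩)
        (by simpa using hkm)
      simp only [Fin.val_mk] at hcr
      have hSm := ih m (by omega) (by omega) k hkm
      rw [hsplit, hcr]
      have ht0 : 0 ≤ α / ((m : ℕ) : ℝ) := by positivity
      have ht1 : α / ((m : ℕ) : ℝ) ≤ 1 := by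
        rw [div_le_one hmr]
        have : (1:ℝ) ≤ ((m : ℕ) : ℝ) := by exact_mod_cast hmpos
        linarith
      constructor
      · nlinarith [hSm.1, hSm.2]
      · nlinarith [hSm.1, hSm.2]

end DBaux

namespace DBaux

variable {n : ℕ}

lemma cov_nonpos {p α : ℝ} (hp0 : 0 < p) (hp1 : p < 1) (ha0 : 0 ≤ α)
    (hap : α * p ≤ 1 - p) (ha1p : α * (1 - p) ≤ p) (ha1 : α ≤ 1)
    {k l : Fin n} (hne : k ≠ l) : e2 p α k l ≤ p * p := by
  have main : ∀ k l : Fin n, (k : ℕ) < (l : ℕ) → e2 p α k l ≤ p * p := by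
    intro k l hkl
    have hcr := cov_rec hp0 hp1 ha0 hap ha1p hkl
    have hS := covS_bounds hp0 hp1 ha0 hap ha1p ha1 (l : ℕ) (le_of_lt l.isLt) k hkl
    have hlr : (0:ℝ) < ((l : ℕ) : ℝ) := by
      have : 0 < (l : ℕ) := by omega
      exact_mod_cast this
    have ht0 : 0 ≤ α / ((l : ℕ) : ℝ) := by positivity
    nlinarith [hS.1]
  rcases Nat.lt_trichotomy (k : ℕ) (l : ℕ) with h | h | h
  · exact main k l h
  · exact absurd (Fin.ext h) hne
  · rw [e2_symm]; exact main l k h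

lemma e2_zero {p : ℝ} (hp0 : 0 < p) (hp1 : p < 1) (k l : Fin n) :
    e2 p 0 k l = if k = l then p else p * p := by
  have ha0 : (0:ℝ) ≤ 0 := le_rfl
  have hap : (0:ℝ) * p ≤ 1 - p := by linarith
  have ha1p : (0:ℝ) * (1 - p) ≤ p := by linarith
  have main : ∀ k l : Fin n, (k : ℕ) < (l : ℕ) → e2 p 0 k l = p * p := by
    intro k l hkl
    have hcr := cov_rec hp0 hp1 ha0 hap ha1p hkl
    have : -(0 / (((l : ℕ) : ℝ))) * (p * (1 - p) + covS p 0 k (l : ℕ)) = 0 := by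
      simp
    rw [this] at hcr
    linarith
  rcases Nat.lt_trichotomy (k : ℕ) (l : ℕ) with h | h | h
  · rw [if_neg (fun he => by subst he; omega), main k l h]
  · have : k = l := Fin.ext h
    subst this
    rw [if_pos rfl, e2_diag hp0 hp1 ha0 hap ha1p]
  · rw [if_neg (fun he => by subst he; omega), e2_symm, main l k h]

lemma cov01 {p α : ℝ} (hp0 : 0 < p) (hp1 : p < 1) (ha0 : 0 < α)
    (hap : α * p ≤ 1 - p) (ha1p : α * (1 - p) ≤ p)
    {k l : Fin n} (hk0 : (k : ℕ) = 0) (hl1 : (l : ℕ) = 1) :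
    e2 p α k l < p * p := by
  have hkl : (k : ℕ) < (l : ℕ) := by omega
  have hcr := cov_rec hp0 hp1 ha0.le hap ha1p hkl
  have hcov0 : covS p α k (l : ℕ) = 0 := by
    unfold covS
    refine Finset.sum_eq_zero fun j _ => ?_
    rw [if_neg]
    rintro ⟨h1, h2⟩
    exact h2 (Fin.ext (by omega))
  rw [hcov0, hl1] at hcr
  norm_num at hcr
  have h1p : (0:ℝ) < 1 - p := by linarith
  have hpos : (0:ℝ) < α * (p * (1 - p)) := mul_pos ha0 (mul_pos hp0 h1p)
  linarith

lemma value {p α : ℝ} (hp0 : 0 < p) (hp1 : p < 1) (ha0 : 0 ≤ α)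
    (hap : α * p ≤ 1 - p) (ha1p : α * (1 - p) ≤ p) (hn : 0 < n) :
    ∑ x : Fin n → Bool, mu p α n x * (((n : ℝ))⁻¹ * (∑ k, b2r (x k)) - p) ^ 2
      = ((n : ℝ))⁻¹ ^ 2 * (∑ k : Fin n, ∑ l : Fin n, e2 p α k l) - p ^ 2 := by
  have hnr : (0:ℝ) < (n : ℝ) := by exact_mod_cast hn
  have hexp : ∀ x : Fin n → Bool,
      mu p α n x * (((n : ℝ))⁻¹ * (∑ k, b2r (x k)) - p) ^ 2
        = ((n : ℝ))⁻¹ ^ 2 * (∑ k : Fin n, ∑ l : Fin n, mu p α n x * (b2r (x k) * b2r (x l)))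
          - 2 * p * ((n : ℝ))⁻¹ * (∑ k : Fin n, mu p α n x * b2r (x k))
          + p ^ 2 * mu p α n x := by
    intro x
    have h1 : (∑ k : Fin n, ∑ l : Fin n, mu p α n x * (b2r (x k) * b2r (x l)))
        = mu p α n x * ((∑ k, b2r (x k)) * (∑ l, b2r (x l))) := by
      rw [Finset.sum_mul_sum, Finset.mul_sum]
      exact Finset.sum_congr rfl fun k _ => by
        rw [Finset.mul_sum]
    have h2 : (∑ k : Fin n, mu p α n x * b2r (x k))
        = mu p α n x * (∑ k, b2r (x k)) := (Finset.mul_sum _ _ _).symm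
    rw [h1, h2]
    ring
  rw [Finset.sum_congr rfl fun x _ => hexp x, Finset.sum_add_distrib, Finset.sum_sub_distrib,
    ← Finset.mul_sum, ← Finset.mul_sum, ← Finset.mul_sum]
  have hA : (∑ x : Fin n → Bool, ∑ k : Fin n, ∑ l : Fin n,
        mu p α n x * (b2r (x k) * b2r (x l)))
      = ∑ k : Fin n, ∑ l : Fin n, e2 p α k l := by
    rw [Finset.sum_comm]
    refine Finset.sum_congr rfl fun k _ => ?_
    rw [Finset.sum_comm]
    rfl
  have hB : (∑ x : Fin n → Bool, ∑ k : Fin n, mu p α n x * b2r (x k)) = (n : ℝ) * p := by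
    rw [Finset.sum_comm]
    have hez : ∀ k : Fin n, (∑ x : Fin n → Bool, mu p α n x * b2r (x k)) = p :=
      fun k => ez_val hp0 hp1 ha0 hap ha1p k
    rw [Finset.sum_congr rfl fun k _ => hez k, Finset.sum_const, card_univ,
      Fintype.card_fin, nsmul_eq_mul]
  rw [hA, hB, mass p α le_rfl, mul_one]
  have hn1 : ((n : ℝ))⁻¹ * (n : ℝ) = 1 := inv_mul_cancel₀ hnr.ne'
  linear_combination (-2 * p ^ 2) * hn1

end DBaux


/-- discrepancy reduction of DBsample (full version, 1-dimensional):
for n ≥ 2 and 0 < α ≤ min((1-p)/p, p/(1-p)),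
E[((1/n)Σ z_k - p)²] for DBsample draws is strictly smaller than for
i.i.d. Bernoulli(p) draws. -/
theorem dbsample_discrepancy_reduction (p α : ℝ) (hp0 : 0 < p) (hp1 : p < 1)
    (hα0 : 0 < α) (hα : α ≤ min ((1 - p) / p) (p / (1 - p)))
    (n : ℕ) (hn : 2 ≤ n) :
    ∑ x : Fin n → Bool, dbDens p α x * ((n : ℝ)⁻¹ * (∑ k, b2r (x k)) - p) ^ 2
      < ∑ x : Fin n → Bool,
          (∏ k, (if x k then p else 1 - p)) * ((n : ℝ)⁻¹ * (∑ k, b2r (x k)) - p) ^ 2 := by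
  classical
  have hp1' : 0 < 1 - p := by linarith
  have hap : α * p ≤ 1 - p := by
    have h := le_trans hα (min_le_left _ _)
    rw [le_div_iff₀ hp0] at h
    linarith
  have ha1p : α * (1 - p) ≤ p := by
    have h := le_trans hα (min_le_right _ _)
    rw [le_div_iff₀ hp1'] at h
    linarith
  have ha1 : α ≤ 1 := by
    rcases le_total p (1 - p) with h | h
    · have h2 := le_trans hα (min_le_right _ _)
      have : p / (1 - p) ≤ 1 := by rw [div_le_one hp1']; linarith
      linarith
    · have h2 := le_trans hα (min_le_left _ _)
      have : (1 - p) / p ≤ 1 := by rw [div_le_one hp0]; linarith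
      linarith
  have ha0 : (0:ℝ) ≤ α := hα0.le
  have hap0 : (0:ℝ) * p ≤ 1 - p := by linarith
  have ha1p0 : (0:ℝ) * (1 - p) ≤ p := by linarith
  have hnpos : 0 < n := by omega
  have hLHS : ∑ x : Fin n → Bool, dbDens p α x * ((n : ℝ)⁻¹ * (∑ k, b2r (x k)) - p) ^ 2
      = ((n : ℝ))⁻¹ ^ 2 * (∑ k : Fin n, ∑ l : Fin n, DBaux.e2 p α k l) - p ^ 2 := by
    rw [← DBaux.value hp0 hp1 ha0 hap ha1p hnpos]
    exact Finset.sum_congr rfl fun x _ => by rw [DBaux.mu_n]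
  have hiid : ∀ x : Fin n → Bool, (∏ k, (if x k then p else 1 - p)) = DBaux.mu p 0 n x := by
    intro x
    unfold DBaux.mu
    refine Finset.prod_congr rfl fun k _ => ?_
    rw [if_pos k.isLt]
    have hq : dbq p 0 x (k : ℕ) = p := by
      unfold dbq
      split
      · rfl
      · have h1 : p * (1 + 0) - 0 * phat x (k : ℕ) = p := by ring
        rw [h1, max_eq_right hp0.le, min_eq_right hp1.le]
    rw [hq]
  have hRHS : ∑ x : Fin n → Bool,
        (∏ k, (if x k then p else 1 - p)) * ((n : ℝ)⁻¹ * (∑ k, b2r (x k)) - p) ^ 2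
      = ((n : ℝ))⁻¹ ^ 2 * (∑ k : Fin n, ∑ l : Fin n, DBaux.e2 p 0 k l) - p ^ 2 := by
    rw [← DBaux.value hp0 hp1 le_rfl hap0 ha1p0 hnpos]
    exact Finset.sum_congr rfl fun x _ => by rw [hiid x]
  rw [hLHS, hRHS]
  have hle : ∀ k l : Fin n, DBaux.e2 p α k l ≤ DBaux.e2 p 0 k l := by
    intro k l
    rw [DBaux.e2_zero hp0 hp1]
    by_cases h : k = l
    · subst h
      rw [if_pos rfl, DBaux.e2_diag hp0 hp1 ha0 hap ha1p]
    · rw [if_neg h]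
      exact DBaux.cov_nonpos hp0 hp1 ha0 hap ha1p ha1 h
  have hne01 : (⟨0, by omega⟩ : Fin n) ≠ (⟨1, by omega⟩ : Fin n) := by
    rw [Ne, Fin.ext_iff]
    simp
  have hlt : (∑ k : Fin n, ∑ l : Fin n, DBaux.e2 p α k l)
      < ∑ k : Fin n, ∑ l : Fin n, DBaux.e2 p 0 k l := by
    refine Finset.sum_lt_sum (fun k _ => Finset.sum_le_sum fun l _ => hle k l) ?_
    refine ⟨⟨0, by omega⟩, Finset.mem_univ _, ?_⟩
    refine Finset.sum_lt_sum (fun l _ => hle _ l) ?_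
    refine ⟨⟨1, by omega⟩, Finset.mem_univ _, ?_⟩
    rw [DBaux.e2_zero hp0 hp1, if_neg hne01]
    exact DBaux.cov01 hp0 hp1 hα0 hap ha1p rfl rfl
  have hsq : (0:ℝ) < ((n : ℝ))⁻¹ ^ 2 := by
    have : (0:ℝ) < (n : ℝ) := by exact_mod_cast hnpos
    positivity
  have := mul_lt_mul_of_pos_left hlt hsq
  linarith
end

section
/- Variance of DBsurf in the distribution-preserving regime: let p ∈ (0,1), 0 < α ≤ min((1-p)/p, p/(1-p)), and let (x_1, x_2) be DBsample draws: x_1 ~ Bernoulli(p), x_2 | x_1 ~ Bernoulli(p(1+α) - α·x_1). With κ = P(x_1=1,x_2=0) + P(x_1=0,x_2=1) and g(x_1,x_2) = (p(1-p)/κ)·(f(x_1)-f(x_2))·(x_1-x_2), we have κ = 2p(1-p)(1+α) and Var[g] = (f(1)-f(0))²·p·(1-p)·(1/(2(1+α)) - p(1-p)). -/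
set_option maxHeartbeats 1000000


open Finset

/-- The two-sample difference estimator g(x₁,x₂) = (p(1-p)/κ)·(f(x₁)-f(x₂))·(x₁-x₂). -/
noncomputable def gEst (p κ : ℝ) (f : ℝ → ℝ) (x : Bool × Bool) : ℝ :=
  p * (1 - p) / κ * (f (b2r x.1) - f (b2r x.2)) * (b2r x.1 - b2r x.2)

/-- Joint density of two DBsample draws (without clipping):
x₁ ~ Bernoulli(p), x₂ | x₁ ~ Bernoulli(p(1+α) - α·x₁). -/
noncomputable def dbW2 (p α : ℝ) (x : Bool × Bool) : ℝ :=
  (if x.1 then p else 1 - p) *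
    (if x.2 then p * (1 + α) - α * b2r x.1 else 1 - (p * (1 + α) - α * b2r x.1))

/-- variance of DBsurf in the distribution-preserving regime
0 < α ≤ min((1-p)/p, p/(1-p)): κ = P(1,0) + P(0,1) = 2p(1-p)(1+α) and
Var[g] = (f(1)-f(0))²·p·(1-p)·(1/(2(1+α)) - p(1-p)). -/
theorem dbsurf_variance_preserving_regime (p α : ℝ) (hp0 : 0 < p) (hp1 : p < 1)
    (hα0 : 0 < α) (hα : α ≤ min ((1 - p) / p) (p / (1 - p))) (f : ℝ → ℝ)
    (κ : ℝ) (hκdef : κ = dbW2 p α (true, false) + dbW2 p α (false, true)) :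
    κ = 2 * p * (1 - p) * (1 + α) ∧
      (∑ x : Bool × Bool, dbW2 p α x * gEst p κ f x ^ 2)
          - (∑ x : Bool × Bool, dbW2 p α x * gEst p κ f x) ^ 2
        = (f 1 - f 0) ^ 2 * p * (1 - p) * (1 / (2 * (1 + α)) - p * (1 - p)) := by
  have hp1' : 0 < 1 - p := by linarith
  have hα1 : (0:ℝ) < 1 + α := by linarith
  have hκ : κ = 2 * p * (1 - p) * (1 + α) := by
    simp [hκdef, dbW2, b2r]; ring
  have hκpos : 0 < κ := by
    rw [hκ]
    have := mul_pos (mul_pos (mul_pos (by norm_num : (0:ℝ) < 2) hp0) hp1') hα1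
    linarith
  have hκne : κ ≠ 0 := ne_of_gt hκpos
  refine ⟨hκ, ?_⟩
  set c : ℝ := p * (1 - p) / κ * (f 1 - f 0) with hc
  have hgtf : gEst p κ f (true, false) = c := by
    simp [gEst, b2r, hc]
  have hgft : gEst p κ f (false, true) = c := by
    simp [gEst, b2r, hc]; ring
  have hgtt : gEst p κ f (true, true) = 0 := by simp [gEst, b2r]
  have hgff : gEst p κ f (false, false) = 0 := by simp [gEst, b2r]
  have hS1 : (∑ x : Bool × Bool, dbW2 p α x * gEst p κ f x) = κ * c := by
    rw [Fintype.sum_prod_type]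
    simp only [Fintype.sum_bool]
    rw [hgtf, hgft, hgtt, hgff, hκdef]
    ring
  have hS2 : (∑ x : Bool × Bool, dbW2 p α x * gEst p κ f x ^ 2) = κ * c ^ 2 := by
    rw [Fintype.sum_prod_type]
    simp only [Fintype.sum_bool]
    rw [hgtf, hgft, hgtt, hgff, hκdef]
    ring
  rw [hS1, hS2, hc, hκ]
  field_simp
end

section
/- Zero variance of DBsurf in the high-correction regime: let p ∈ (0,1), α ≥ max((1-p)/p, p/(1-p)), and let (x_1, x_2) be DBsample draws: x_1 ~ Bernoulli(p), x_2 | x_1 ~ Bernoulli(clip(p(1+α) - α·x_1, 0, 1)). Then P(x_1=1, x_2=0) + P(x_1=0, x_2=1) = 1, i.e. x_2 = 1 - x_1 almost surely, and hence the normalized estimator g(x_1,x_2) = p(1-p)·(f(x_1)-f(x_2))·(x_1-x_2) has zero variance and equals the true gradient (f(1)-f(0))·p·(1-p) almost surely. -/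
open Finset

/-- Joint density of two DBsample draws with clipping:
x₁ ~ Bernoulli(p), x₂ | x₁ ~ Bernoulli(clip(p(1+α) - α·x₁, 0, 1)). -/
noncomputable def dbW2c (p α : ℝ) (x : Bool × Bool) : ℝ :=
  (if x.1 then p else 1 - p) *
    (if x.2 then min 1 (max 0 (p * (1 + α) - α * b2r x.1))
      else 1 - min 1 (max 0 (p * (1 + α) - α * b2r x.1)))

/-- zero variance of DBsurf in the high-correction regime
α ≥ max((1-p)/p, p/(1-p)): P(1,0)+P(0,1) = 1, x₂ = 1 - x₁ almost surely, the
estimator g = p(1-p)(f(x₁)-f(x₂))(x₁-x₂) has zero variance and equals the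
true gradient (f(1)-f(0))·p·(1-p) almost surely. -/
theorem dbsurf_zero_variance_high_correction (p α : ℝ) (hp0 : 0 < p) (hp1 : p < 1)
    (hα : max ((1 - p) / p) (p / (1 - p)) ≤ α) (f : ℝ → ℝ) :
    dbW2c p α (true, false) + dbW2c p α (false, true) = 1 ∧
    (∀ x : Bool × Bool, dbW2c p α x ≠ 0 → x.2 = !x.1) ∧
    (∑ x : Bool × Bool, dbW2c p α x * gEst p 1 f x ^ 2)
        - (∑ x : Bool × Bool, dbW2c p α x * gEst p 1 f x) ^ 2 = 0 ∧
    (∀ x : Bool × Bool, dbW2c p α x ≠ 0 →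
      gEst p 1 f x = (f 1 - f 0) * p * (1 - p)) := by
  have h1p : 0 < 1 - p := by linarith
  have hα1 : (1 - p) / p ≤ α := le_trans (le_max_left _ _) hα
  have hα2 : p / (1 - p) ≤ α := le_trans (le_max_right _ _) hα
  rw [div_le_iff₀ hp0] at hα1
  rw [div_le_iff₀ h1p] at hα2
  have hA : 1 ≤ p * (1 + α) := by nlinarith
  have hB : p * (1 + α) - α ≤ 0 := by nlinarith
  have e1 : min 1 (max 0 (p * (1 + α) - α * b2r true)) = 0 := by
    simp only [b2r, if_pos, mul_one]
    rw [max_eq_left hB]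
    simp
  have e2 : min 1 (max 0 (p * (1 + α) - α * b2r false)) = 1 := by
    simp only [b2r, if_neg Bool.false_ne_true, mul_zero, sub_zero]
    rw [max_eq_right (by linarith : (0:ℝ) ≤ p * (1 + α))]
    exact min_eq_left hA
  have v1 : dbW2c p α (true, true) = 0 := by simp [dbW2c, e1]
  have v2 : dbW2c p α (true, false) = p := by simp [dbW2c, e1]
  have v3 : dbW2c p α (false, true) = 1 - p := by simp [dbW2c, e2]
  have v4 : dbW2c p α (false, false) = 0 := by simp [dbW2c, e2]
  have g2 : gEst p 1 f (true, false) = (f 1 - f 0) * p * (1 - p) := by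
    simp [gEst, b2r]; ring
  have g3 : gEst p 1 f (false, true) = (f 1 - f 0) * p * (1 - p) := by
    simp [gEst, b2r]; ring
  refine ⟨by rw [v2, v3]; ring, ?_, ?_, ?_⟩
  · intro x hx
    rcases x with ⟨x1, x2⟩
    rcases x1 <;> rcases x2 <;> simp_all
  · rw [Fintype.sum_prod_type, Fintype.sum_bool, Fintype.sum_bool, Fintype.sum_bool,
      Fintype.sum_prod_type, Fintype.sum_bool, Fintype.sum_bool, Fintype.sum_bool,
      v1, v2, v3, v4, g2, g3]
    ring
  · intro x hx
    rcases x with ⟨x1, x2⟩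
    rcases x1 <;> rcases x2 <;> simp_all
end

section
/- Variance of DBsurf in the intermediate regime: let p ∈ (0,1), p ≠ 1/2, and min((1-p)/p, p/(1-p)) < α ≤ max((1-p)/p, p/(1-p)). With DBsample draws x_1 ~ Bernoulli(p), x_2 | x_1 ~ Bernoulli(clip(p(1+α) - α·x_1, 0, 1)), the quantity κ = P(x_1=1,x_2=0) + P(x_1=0,x_2=1) equals p(1-p)·(1 + α + 1/max(p, 1-p)), and the unbiased estimator g = (p(1-p)/κ)·(f(x_1)-f(x_2))·(x_1-x_2) has Var[g] = (f(1)-f(0))²·p·(1-p)·(max(p,1-p)/((1+α)·max(p,1-p) + 1) - p(1-p)). -/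
open Finset

set_option maxHeartbeats 2000000 in
/-- variance of DBsurf in the intermediate regime
min((1-p)/p, p/(1-p)) < α ≤ max((1-p)/p, p/(1-p)) (p ≠ 1/2):
κ = P(1,0)+P(0,1) = p(1-p)·(1 + α + 1/max(p,1-p)) and
Var[g] = (f(1)-f(0))²·p·(1-p)·(max(p,1-p)/((1+α)·max(p,1-p) + 1) - p(1-p)). -/
theorem dbsurf_variance_intermediate_regime (p α : ℝ) (hp0 : 0 < p) (hp1 : p < 1)
    (hphalf : p ≠ 1 / 2)
    (hα1 : min ((1 - p) / p) (p / (1 - p)) < α)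
    (hα2 : α ≤ max ((1 - p) / p) (p / (1 - p))) (f : ℝ → ℝ)
    (κ : ℝ) (hκdef : κ = dbW2c p α (true, false) + dbW2c p α (false, true)) :
    κ = p * (1 - p) * (1 + α + 1 / max p (1 - p)) ∧
      (∑ x : Bool × Bool, dbW2c p α x * gEst p κ f x ^ 2)
          - (∑ x : Bool × Bool, dbW2c p α x * gEst p κ f x) ^ 2
        = (f 1 - f 0) ^ 2 * p * (1 - p)
            * (max p (1 - p) / ((1 + α) * max p (1 - p) + 1) - p * (1 - p)) := by
  have hq : (0:ℝ) < 1 - p := by linarith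
  subst hκdef
  rcases lt_or_gt_of_ne hphalf with hlt | hgt
  · -- p < 1/2
    have hple : p ≤ 1 - p := by linarith
    have hmin : min ((1 - p) / p) (p / (1 - p)) = p / (1 - p) := by
      apply min_eq_right
      rw [div_le_div_iff₀ hq hp0]
      nlinarith
    have hmax' : max ((1 - p) / p) (p / (1 - p)) = (1 - p) / p := by
      apply max_eq_left
      rw [div_le_div_iff₀ hq hp0]
      nlinarith
    rw [hmin] at hα1
    rw [hmax'] at hα2
    have hα1' : p < α * (1 - p) := by
      rwa [div_lt_iff₀ hq] at hα1
    have hα2' : α * p ≤ 1 - p := by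
      rwa [le_div_iff₀ hp0] at hα2
    have hαpos : 0 < α := by nlinarith
    have hmax : max p (1 - p) = 1 - p := max_eq_right hple
    have e1 : p * (1 + α) - α * b2r true = p * (1 + α) - α := by simp [b2r]
    have e0 : p * (1 + α) - α * b2r false = p * (1 + α) := by simp [b2r]
    have hc1 : min 1 (max 0 (p * (1 + α) - α * b2r true)) = 0 := by
      rw [e1, max_eq_left (by nlinarith), min_eq_right (by norm_num)]
    have hc0 : min 1 (max 0 (p * (1 + α) - α * b2r false)) = p * (1 + α) := by
      rw [e0, max_eq_right (by nlinarith), min_eq_right (by nlinarith)]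
    have hκval : dbW2c p α (true, false) + dbW2c p α (false, true)
        = p + (1 - p) * (p * (1 + α)) := by
      simp [dbW2c, hc0, hc1]
    have hκpos : 0 < p + (1 - p) * (p * (1 + α)) := by nlinarith
    have hκne : p + (1 - p) * (p * (1 + α)) ≠ 0 := ne_of_gt hκpos
    constructor
    · rw [hκval, hmax]
      field_simp
      ring
    · rw [hκval, hmax]
      set A := p + (1 - p) * (p * (1 + α)) with hA
      have hWtf : dbW2c p α (true, false) = p := by
        simp [dbW2c, hc1]
      have hWft : dbW2c p α (false, true) = (1 - p) * (p * (1 + α)) := by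
        simp [dbW2c, hc0]
      have hg0 : ∀ b, gEst p A f (b, b) = 0 := by
        intro b; simp [gEst]
      have hgtf : gEst p A f (true, false) = p * (1 - p) / A * (f 1 - f 0) := by
        simp [gEst, b2r]
      have hgft : gEst p A f (false, true) = p * (1 - p) / A * (f 1 - f 0) := by
        simp only [gEst, b2r]; norm_num; ring
      simp only [Fintype.sum_prod_type, Fintype.sum_bool, hWtf, hWft, hgtf, hgft,
        hg0 true, hg0 false]
      rw [hA]
      field_simp
      ring
  · -- p > 1/2
    have hple : 1 - p ≤ p := by linarith
    have hmin : min ((1 - p) / p) (p / (1 - p)) = (1 - p) / p := by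
      apply min_eq_left
      rw [div_le_div_iff₀ hp0 hq]
      nlinarith
    have hmax' : max ((1 - p) / p) (p / (1 - p)) = p / (1 - p) := by
      apply max_eq_right
      rw [div_le_div_iff₀ hp0 hq]
      nlinarith
    rw [hmin] at hα1
    rw [hmax'] at hα2
    have hα1' : 1 - p < α * p := by
      rwa [div_lt_iff₀ hp0] at hα1
    have hα2' : α * (1 - p) ≤ p := by
      rwa [le_div_iff₀ hq] at hα2
    have hαpos : 0 < α := by nlinarith
    have hmax : max p (1 - p) = p := max_eq_left hple
    have e1 : p * (1 + α) - α * b2r true = p * (1 + α) - α := by simp [b2r]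
    have e0 : p * (1 + α) - α * b2r false = p * (1 + α) := by simp [b2r]
    have hc1 : min 1 (max 0 (p * (1 + α) - α * b2r true)) = p * (1 + α) - α := by
      rw [e1, max_eq_right (by nlinarith), min_eq_right (by nlinarith)]
    have hc0 : min 1 (max 0 (p * (1 + α) - α * b2r false)) = 1 := by
      rw [e0, max_eq_right (by nlinarith), min_eq_left (by nlinarith)]
    have hκval : dbW2c p α (true, false) + dbW2c p α (false, true)
        = p * (1 - (p * (1 + α) - α)) + (1 - p) := by
      simp [dbW2c, hc0, hc1]
    have hκpos : 0 < p * (1 - (p * (1 + α) - α)) + (1 - p) := by nlinarith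
    have hκne : p * (1 - (p * (1 + α) - α)) + (1 - p) ≠ 0 := ne_of_gt hκpos
    constructor
    · rw [hκval, hmax]
      field_simp
      ring
    · rw [hκval, hmax]
      set A := p * (1 - (p * (1 + α) - α)) + (1 - p) with hA
      have hWtf : dbW2c p α (true, false) = p * (1 - (p * (1 + α) - α)) := by
        simp [dbW2c, hc1]
      have hWft : dbW2c p α (false, true) = (1 - p) * 1 := by
        simp [dbW2c, hc0]
      have hg0 : ∀ b, gEst p A f (b, b) = 0 := by
        intro b; simp [gEst]
      have hgtf : gEst p A f (true, false) = p * (1 - p) / A * (f 1 - f 0) := by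
        simp [gEst, b2r]
      have hgft : gEst p A f (false, true) = p * (1 - p) / A * (f 1 - f 0) := by
        simp only [gEst, b2r]; norm_num; ring
      simp only [Fintype.sum_prod_type, Fintype.sum_bool, hWtf, hWft, hgtf, hgft,
        hg0 true, hg0 false]
      rw [hA]
      have hκne2 : p * (1 - (p * (1 + α) - α)) + (1 - p) ≠ 0 := by rw [← hA]; exact hκne
      field_simp
      ring
end

section
/- Monotone variance reduction in α: with the variance formulas V(α) of the two-sample DBsurf estimator—V(α) = C·(1/(2(1+α)) - p(1-p)) for 0 ≤ α ≤ m, V(α) = C·(max(p,1-p)/((1+α)max(p,1-p)+1) - p(1-p)) for m < α ≤ M, and V(α) = 0 for α ≥ M, where m = min((1-p)/p, p/(1-p)), M = max((1-p)/p, p/(1-p)), and C = (f(1)-f(0))²·p·(1-p) ≥ 0—the function V is monotone nonincreasing on [0, ∞), nonnegative, and the piecewise expressions agree at the boundary points α = m and α = M. -/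
/-- monotone variance reduction in α: the piecewise variance function
V of the two-sample DBsurf estimator is monotone nonincreasing on [0,∞),
nonnegative, and the piecewise expressions agree at the boundary points
α = m := min((1-p)/p, p/(1-p)) and α = M := max((1-p)/p, p/(1-p)). -/
theorem dbsurf_variance_monotone (p : ℝ) (hp0 : 0 < p) (hp1 : p < 1) (f : ℝ → ℝ) :
    let m : ℝ := min ((1 - p) / p) (p / (1 - p))
    let M : ℝ := max ((1 - p) / p) (p / (1 - p))
    let C : ℝ := (f 1 - f 0) ^ 2 * p * (1 - p)
    let V : ℝ → ℝ := fun α =>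
      if α ≤ m then C * (1 / (2 * (1 + α)) - p * (1 - p))
      else if α ≤ M then
        C * (max p (1 - p) / ((1 + α) * max p (1 - p) + 1) - p * (1 - p))
      else 0
    AntitoneOn V (Set.Ici 0) ∧
    (∀ α ∈ Set.Ici (0 : ℝ), 0 ≤ V α) ∧
    C * (1 / (2 * (1 + m)) - p * (1 - p))
      = C * (max p (1 - p) / ((1 + m) * max p (1 - p) + 1) - p * (1 - p)) ∧
    C * (max p (1 - p) / ((1 + M) * max p (1 - p) + 1) - p * (1 - p)) = 0 := by
  intro m M C V
  have hp1' : 0 < 1 - p := by linarith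
  set n : ℝ := min p (1 - p) with hn
  set q : ℝ := max p (1 - p) with hq
  have hVdef : ∀ α : ℝ, V α =
      if α ≤ m then C * (1 / (2 * (1 + α)) - p * (1 - p))
      else if α ≤ M then C * (q / ((1 + α) * q + 1) - p * (1 - p))
      else 0 := fun _ => rfl
  have hn0 : 0 < n := lt_min hp0 hp1'
  have hq0 : 0 < q := lt_of_lt_of_le hp0 (le_max_left _ _)
  have hnq : n ≤ q := min_le_max
  have hsum : n + q = 1 := by
    rcases le_total p (1 - p) with h | h
    · rw [hn, hq, min_eq_left h, max_eq_right h]; ring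
    · rw [hn, hq, min_eq_right h, max_eq_left h]; ring
  have hprod : n * q = p * (1 - p) := by
    rcases le_total p (1 - p) with h | h
    · rw [hn, hq, min_eq_left h, max_eq_right h]
    · rw [hn, hq, min_eq_right h, max_eq_left h]; ring
  have hn2 : n ≤ 1 / 2 := by linarith
  have hm : m = n / q := by
    rcases le_total p (1 - p) with h | h
    · have h1 : p / (1 - p) ≤ (1 - p) / p := by
        rw [div_le_div_iff₀ hp1' hp0]; nlinarith
      show min ((1 - p) / p) (p / (1 - p)) = n / q
      rw [min_eq_right h1, hn, hq, min_eq_left h, max_eq_right h]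
    · have h1 : (1 - p) / p ≤ p / (1 - p) := by
        rw [div_le_div_iff₀ hp0 hp1']; nlinarith
      show min ((1 - p) / p) (p / (1 - p)) = n / q
      rw [min_eq_left h1, hn, hq, min_eq_right h, max_eq_left h]
  have hM : M = q / n := by
    rcases le_total p (1 - p) with h | h
    · have h1 : p / (1 - p) ≤ (1 - p) / p := by
        rw [div_le_div_iff₀ hp1' hp0]; nlinarith
      show max ((1 - p) / p) (p / (1 - p)) = q / n
      rw [max_eq_left h1, hn, hq, min_eq_left h, max_eq_right h]
    · have h1 : (1 - p) / p ≤ p / (1 - p) := by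
        rw [div_le_div_iff₀ hp0 hp1']; nlinarith
      show max ((1 - p) / p) (p / (1 - p)) = q / n
      rw [max_eq_right h1, hn, hq, min_eq_right h, max_eq_left h]
  have hm0 : 0 ≤ m := by rw [hm]; positivity
  have hmM : m ≤ M := min_le_max
  have hC : 0 ≤ C := by
    have h := sq_nonneg (f 1 - f 0)
    show 0 ≤ (f 1 - f 0) ^ 2 * p * (1 - p)
    exact mul_nonneg (mul_nonneg h hp0.le) hp1'.le
  clear_value V m M C n q
  -- boundary identities
  have h1m : 1 + m = 1 / q := by rw [hm]; field_simp; linarith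
  have bridge : 1 / (2 * (1 + m)) = q / ((1 + m) * q + 1) := by
    rw [h1m]; field_simp; norm_num
  have atM : q / ((1 + M) * q + 1) = p * (1 - p) := by
    have hden : (1 + M) * q + 1 = 1 / n := by
      rw [hM]; field_simp; nlinarith [hsum]
    rw [hden, div_div_eq_mul_div, div_one, ← hprod]; ring
  -- monotonicity of pieces
  have key1 : ∀ a b : ℝ, 0 ≤ a → a ≤ b → 1 / (2 * (1 + b)) ≤ 1 / (2 * (1 + a)) := by
    intro a b ha hab
    rw [div_le_div_iff₀ (by linarith) (by linarith)]; nlinarith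
  have key2 : ∀ a b : ℝ, 0 ≤ a → a ≤ b →
      q / ((1 + b) * q + 1) ≤ q / ((1 + a) * q + 1) := by
    intro a b ha hab
    rw [div_le_div_iff₀ (by nlinarith) (by nlinarith)]
    nlinarith [mul_nonneg (mul_nonneg hq0.le hq0.le) (sub_nonneg.2 hab)]
  -- nonnegativity of pieces
  have nonneg1 : ∀ α : ℝ, 0 ≤ α → α ≤ m → p * (1 - p) ≤ 1 / (2 * (1 + α)) := by
    intro α h0 h1
    have e1 := key1 α m h0 h1
    have e2 : 1 / (2 * (1 + m)) = q / 2 := by rw [h1m]; field_simp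
    nlinarith [hprod]
  have nonneg2 : ∀ α : ℝ, 0 ≤ α → α ≤ M →
      p * (1 - p) ≤ q / ((1 + α) * q + 1) := by
    intro α h0 h1
    have e1 := key2 α M h0 h1
    linarith [atM.ge.trans e1]
  have hVnonneg : ∀ α ∈ Set.Ici (0 : ℝ), 0 ≤ V α := by
    intro α hα
    have h0 : 0 ≤ α := hα
    rw [hVdef]
    split_ifs with h1 h2
    · exact mul_nonneg hC (by linarith [nonneg1 α h0 h1])
    · exact mul_nonneg hC (by linarith [nonneg2 α h0 h2])
    · exact le_rfl
  refine ⟨?_, hVnonneg, ?_, ?_⟩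
  · intro a ha b hb hab
    have ha0 : (0 : ℝ) ≤ a := ha
    have hb0 : (0 : ℝ) ≤ b := hb
    have hVb0 : 0 ≤ V b := hVnonneg b hb
    rw [hVdef, hVdef]
    split_ifs with h1 h2 h3 h4 h5
    · exact mul_le_mul_of_nonneg_left (by linarith [key1 a b ha0 hab]) hC
    · exact absurd (hab.trans h1) h2
    · exact absurd (hab.trans h1) h2
    · exact mul_le_mul_of_nonneg_left
        (by linarith [key2 m b hm0 (not_le.1 h1).le, key1 a m ha0 h5, bridge]) hC
    · exact mul_le_mul_of_nonneg_left (by linarith [key2 a b ha0 hab]) hC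
    · rename_i h6; exact absurd (hab.trans h4) h6
    · rename_i h5; exact mul_nonneg hC (by linarith [nonneg1 a ha0 h5])
    · rename_i h5 h6; exact mul_nonneg hC (by linarith [nonneg2 a ha0 h6])
    · exact le_rfl
  · rw [bridge]
  · rw [atM]; ring
end
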